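/- arXiv:2511.02984 — 6 statements merged into one kernel-verified Lean document; each statement's English description precedes it below -/
import Mathlib

section
/- Consider a cOMARS design with 4n + n₀ runs obtained by concatenating two parent DSDs, each the foldover of an n×m conference design (m > 4, n even), plus n₀ center runs. Then the (Pearson) correlation between the quadratic-effect columns of any two distinct factors i and j equals (n₀(n−2) − 4)/((n−1)(n₀+4)). -/
open Finset Filter

/-- A conference design: mutually orthogonal columns, exactly one zero per column,
at most one zero per row, and ±1 entries elsewhere. -/
def IsConferenceDesign {n m : ℕ} (C : Matrix (Fin n) (Fin m) ℝ) : Prop :=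
  (∀ i j : Fin m, i ≠ j → ∑ r, C r i * C r j = 0) ∧
  (∀ j : Fin m, ∃! r : Fin n, C r j = 0) ∧
  (∀ r : Fin n, ∀ i j : Fin m, C r i = 0 → C r j = 0 → i = j) ∧
  (∀ r : Fin n, ∀ j : Fin m, C r j = 0 ∨ C r j = 1 ∨ C r j = -1)

/-- The foldover [C; -C] of a matrix C. -/
def foldover {n m : ℕ} (C : Matrix (Fin n) (Fin m) ℝ) :
    Matrix (Fin n ⊕ Fin n) (Fin m) ℝ :=
  fun r j => match r with
    | .inl a => C a j
    | .inr a => -C a j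

/-- A cOMARS design: two stacked parent DSDs (foldovers) plus n₀ center runs. -/
def cOMARS {n m : ℕ} (C₁ C₂ : Matrix (Fin n) (Fin m) ℝ) (n₀ : ℕ) :
    Matrix (((Fin n ⊕ Fin n) ⊕ (Fin n ⊕ Fin n)) ⊕ Fin n₀) (Fin m) ℝ :=
  fun r j => match r with
    | .inl (.inl a) => foldover C₁ a j
    | .inl (.inr a) => foldover C₂ a j
    | .inr _ => 0

/-- Pearson correlation of two columns of a model matrix. -/
noncomputable def pearson {ι : Type*} [Fintype ι] (u v : ι → ℝ) : ℝ :=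
  (∑ r, u r * v r - (∑ r, u r) * (∑ r, v r) / (Fintype.card ι)) /
    (Real.sqrt (∑ r, u r ^ 2 - (∑ r, u r) ^ 2 / (Fintype.card ι)) *
     Real.sqrt (∑ r, v r ^ 2 - (∑ r, v r) ^ 2 / (Fintype.card ι)))



lemma conf_sq {n m : ℕ} {C : Matrix (Fin n) (Fin m) ℝ}
    (h : IsConferenceDesign C) {i : Fin m} {r₀ : Fin n}
    (h₀ : C r₀ i = 0) (hu : ∀ r, C r i = 0 → r = r₀) (r : Fin n) :
    (C r i) ^ 2 = 1 - (if r = r₀ then (1:ℝ) else 0) := by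
  by_cases hr : r = r₀
  · subst hr; simp [h₀]
  · rcases h.2.2.2 r i with h' | h' | h'
    · exact absurd (hu r h') hr
    · simp [h', hr]
    · simp [h', hr]

lemma conf_sum_sq {n m : ℕ} {C : Matrix (Fin n) (Fin m) ℝ}
    (h : IsConferenceDesign C) (i : Fin m) :
    ∑ r, (C r i) ^ 2 = (n : ℝ) - 1 := by
  obtain ⟨r₀, h₀, hu⟩ := h.2.1 i
  calc ∑ r, (C r i) ^ 2 = ∑ r, (1 - (if r = r₀ then (1:ℝ) else 0)) :=
        Finset.sum_congr rfl (fun r _ => conf_sq h h₀ hu r)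
    _ = (n : ℝ) - 1 := by
        simp [Finset.sum_sub_distrib, Finset.sum_ite_eq']

lemma conf_sq_sq {n m : ℕ} {C : Matrix (Fin n) (Fin m) ℝ}
    (h : IsConferenceDesign C) (r : Fin n) (i : Fin m) :
    ((C r i) ^ 2) ^ 2 = (C r i) ^ 2 := by
  rcases h.2.2.2 r i with h' | h' | h' <;> simp [h']

lemma conf_sum_sq_mul {n m : ℕ} {C : Matrix (Fin n) (Fin m) ℝ}
    (h : IsConferenceDesign C) {i j : Fin m} (hij : i ≠ j) :
    ∑ r, (C r i) ^ 2 * (C r j) ^ 2 = (n : ℝ) - 2 := by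
  obtain ⟨ri, h₀i, hui⟩ := h.2.1 i
  obtain ⟨rj, h₀j, huj⟩ := h.2.1 j
  have hrr : ri ≠ rj := by
    intro he
    exact hij (h.2.2.1 ri i j h₀i (he ▸ h₀j))
  calc ∑ r, (C r i) ^ 2 * (C r j) ^ 2
      = ∑ r, (1 - ((if r = ri then (1:ℝ) else 0) + (if r = rj then (1:ℝ) else 0))) := by
        refine Finset.sum_congr rfl (fun r _ => ?_)
        rw [conf_sq h h₀i hui r, conf_sq h h₀j huj r]
        by_cases hri : r = ri
        · have : r ≠ rj := hri ▸ hrr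
          simp [hri, this, hrr]
        · by_cases hrj : r = rj <;> simp [hri, hrj, hrr.symm]
    _ = (n : ℝ) - 2 := by
        simp [Finset.sum_sub_distrib, Finset.sum_add_distrib, Finset.sum_ite_eq']
        ring

lemma conf_cols_le_rows {n m : ℕ} {C : Matrix (Fin n) (Fin m) ℝ}
    (h : IsConferenceDesign C) : m ≤ n := by
  classical
  have : ∀ k : Fin m, ∃ r : Fin n, C r k = 0 := fun k => ⟨(h.2.1 k).choose, (h.2.1 k).choose_spec.1⟩
  choose g hg using this
  have hinj : Function.Injective g := fun a b hab => h.2.2.1 (g a) a b (hg a) (hab ▸ hg b)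
  simpa using Fintype.card_le_of_injective g hinj

lemma cOMARS_sum_sq {n m n₀ : ℕ} (C₁ C₂ : Matrix (Fin n) (Fin m) ℝ)
    (h₁ : IsConferenceDesign C₁) (h₂ : IsConferenceDesign C₂) (i : Fin m) :
    ∑ r, (cOMARS C₁ C₂ n₀ r i) ^ 2 = 4 * (n : ℝ) - 4 := by
  simp only [Fintype.sum_sum_type, cOMARS, foldover, neg_sq, Finset.sum_const,
    smul_zero, ne_eq, zero_pow, OfNat.ofNat_ne_zero, not_false_iff]
  rw [conf_sum_sq h₁ i, conf_sum_sq h₂ i]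
  simp; ring

lemma cOMARS_sum_sq_sq {n m n₀ : ℕ} (C₁ C₂ : Matrix (Fin n) (Fin m) ℝ)
    (h₁ : IsConferenceDesign C₁) (h₂ : IsConferenceDesign C₂) (i : Fin m) :
    ∑ r, ((cOMARS C₁ C₂ n₀ r i) ^ 2) ^ 2 = 4 * (n : ℝ) - 4 := by
  have : ∀ r, ((cOMARS C₁ C₂ n₀ r i) ^ 2) ^ 2 = (cOMARS C₁ C₂ n₀ r i) ^ 2 := by
    rintro (((a | a) | (a | a)) | a) <;>
      simp only [cOMARS, foldover, neg_sq] <;>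
      first
        | exact conf_sq_sq h₁ a i
        | exact conf_sq_sq h₂ a i
        | norm_num
  rw [Finset.sum_congr rfl (fun r _ => this r)]
  exact cOMARS_sum_sq C₁ C₂ h₁ h₂ i

lemma cOMARS_sum_mul {n m n₀ : ℕ} (C₁ C₂ : Matrix (Fin n) (Fin m) ℝ)
    (h₁ : IsConferenceDesign C₁) (h₂ : IsConferenceDesign C₂) {i j : Fin m}
    (hij : i ≠ j) :
    ∑ r, (cOMARS C₁ C₂ n₀ r i) ^ 2 * (cOMARS C₁ C₂ n₀ r j) ^ 2 = 4 * (n : ℝ) - 8 := by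
  simp only [Fintype.sum_sum_type, cOMARS, foldover, neg_sq, Finset.sum_const,
    smul_zero, ne_eq, zero_pow, OfNat.ofNat_ne_zero, not_false_iff, mul_zero, zero_mul]
  rw [conf_sum_sq_mul h₁ hij, conf_sum_sq_mul h₂ hij]
  simp; ring

theorem stmt_5 {n m n₀ : ℕ} (C₁ C₂ : Matrix (Fin n) (Fin m) ℝ)
    (h₁ : IsConferenceDesign C₁) (h₂ : IsConferenceDesign C₂)
    (hm : 4 < m) (hn : Even n) (hn₀ : 1 ≤ n₀) (i j : Fin m) (hij : i ≠ j) :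
    pearson (fun r => (cOMARS C₁ C₂ n₀ r i) ^ 2) (fun r => (cOMARS C₁ C₂ n₀ r j) ^ 2)
      = ((n₀ : ℝ) * ((n : ℝ) - 2) - 4) / (((n : ℝ) - 1) * ((n₀ : ℝ) + 4)) := by
  have hn5 : 5 ≤ n := le_trans hm (conf_cols_le_rows h₁)
  have hnR : (5 : ℝ) ≤ (n : ℝ) := by exact_mod_cast hn5
  have hn0R : (1 : ℝ) ≤ (n₀ : ℝ) := by exact_mod_cast hn₀
  have hcard : ((Fintype.card (((Fin n ⊕ Fin n) ⊕ (Fin n ⊕ Fin n)) ⊕ Fin n₀)) : ℝ)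
      = 4 * (n : ℝ) + (n₀ : ℝ) := by
    simp [Fintype.card_sum]; push_cast; ring
  have hN : (0 : ℝ) < 4 * (n : ℝ) + (n₀ : ℝ) := by nlinarith
  unfold pearson
  rw [hcard, cOMARS_sum_sq C₁ C₂ h₁ h₂ i, cOMARS_sum_sq C₁ C₂ h₁ h₂ j,
    cOMARS_sum_sq_sq C₁ C₂ h₁ h₂ i, cOMARS_sum_sq_sq C₁ C₂ h₁ h₂ j,
    cOMARS_sum_mul C₁ C₂ h₁ h₂ hij]
  set N : ℝ := 4 * (n : ℝ) + (n₀ : ℝ)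
  have hD : (4 * (n : ℝ) - 4) - (4 * (n : ℝ) - 4) ^ 2 / N
      = (4 * (n : ℝ) - 4) * ((n₀ : ℝ) + 4) / N := by
    field_simp
    ring
  have hDpos : (0 : ℝ) < (4 * (n : ℝ) - 4) - (4 * (n : ℝ) - 4) ^ 2 / N := by
    rw [hD]
    apply div_pos (mul_pos (by nlinarith) (by nlinarith)) hN
  rw [Real.mul_self_sqrt hDpos.le]
  rw [div_eq_div_iff hDpos.ne' (by nlinarith : ((n : ℝ) - 1) * ((n₀ : ℝ) + 4) ≠ 0)]
  field_simp
  ring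
end

section
/- In a cOMARS design built from two parent DSDs that are foldovers of n×m conference designs, the absolute correlation between two two-factor interaction columns that share a factor (columns for pairs {i,j} and {i,k} with j ≠ k) takes one of exactly two values: 1/(n−2) or 0. -/
open Finset Filter

lemma conf_sq_sum {n m : ℕ} {C : Matrix (Fin n) (Fin m) ℝ}
    (h : IsConferenceDesign C) {p q : Fin m} (hpq : p ≠ q) :
    ∑ a, (C a p * C a q) ^ 2 = (n : ℝ) - 2 := by
  obtain ⟨rp, hp, hpu⟩ := h.2.1 p
  obtain ⟨rq, hq, hqu⟩ := h.2.1 q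
  have hne : rp ≠ rq := by
    intro he; subst he; exact hpq (h.2.2.1 rp p q hp hq)
  have hsum : ∑ a, (C a p * C a q) ^ 2
      = ∑ a ∈ univ \ ({rp, rq} : Finset (Fin n)), (C a p * C a q) ^ 2 := by
    refine (Finset.sum_subset (Finset.sdiff_subset) ?_).symm
    intro x _ hx
    simp only [Finset.mem_sdiff, Finset.mem_univ, true_and, not_not,
      Finset.mem_insert, Finset.mem_singleton] at hx
    rcases hx with rfl | rfl
    · simp [hp]
    · simp [hq]
  have hone : ∀ a ∈ univ \ ({rp, rq} : Finset (Fin n)), (C a p * C a q) ^ 2 = 1 := by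
    intro a ha
    simp only [Finset.mem_sdiff, Finset.mem_univ, true_and, Finset.mem_insert,
      Finset.mem_singleton, not_or] at ha
    have hap : C a p ≠ 0 := fun h0 => ha.1 (hpu a h0)
    have haq : C a q ≠ 0 := fun h0 => ha.2 (hqu a h0)
    rcases h.2.2.2 a p with h1 | h1 | h1 <;> rcases h.2.2.2 a q with h2 | h2 | h2 <;>
      first
        | exact absurd h1 hap
        | exact absurd h2 haq
        | (rw [h1, h2]; norm_num)
  have hcard : (univ \ ({rp, rq} : Finset (Fin n))).card = n - 2 := by
    rw [Finset.card_sdiff_of_subset (Finset.subset_univ _), Finset.card_univ, Fintype.card_fin,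
      Finset.card_insert_of_notMem (by simpa using hne), Finset.card_singleton]
  have h2n : 2 ≤ n := by
    have := Finset.card_le_univ ({rp, rq} : Finset (Fin n))
    have h2 : ({rp, rq} : Finset (Fin n)).card = 2 := by
      rw [Finset.card_insert_of_notMem (by simpa using hne), Finset.card_singleton]
    rw [h2, Fintype.card_fin] at this
    exact this
  rw [hsum, Finset.sum_congr rfl hone, Finset.sum_const, hcard, nsmul_eq_mul, mul_one]
  push_cast [Nat.cast_sub h2n]
  ring

lemma conf_cross {n m : ℕ} {C : Matrix (Fin n) (Fin m) ℝ}
    (h : IsConferenceDesign C) {i j k : Fin m} (hij : i ≠ j) (hik : i ≠ k) (hjk : j ≠ k) :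
    ∃ e : ℝ, (e = 1 ∨ e = -1) ∧ ∑ a, (C a i * C a j) * (C a i * C a k) = e := by
  obtain ⟨ri, hi, hiu⟩ := h.2.1 i
  refine ⟨-(C ri j * C ri k), ?_, ?_⟩
  · have hj' : C ri j ≠ 0 := fun h0 => hij (h.2.2.1 ri i j hi h0)
    have hk' : C ri k ≠ 0 := fun h0 => hik (h.2.2.1 ri i k hi h0)
    rcases h.2.2.2 ri j with h1 | h1 | h1 <;> rcases h.2.2.2 ri k with h2 | h2 | h2 <;>
      first
        | exact absurd h1 hj'
        | exact absurd h2 hk'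
        | (rw [h1, h2]; norm_num)
  · have key : ∀ a, (C a i * C a j) * (C a i * C a k)
        = C a j * C a k - (if a = ri then C a j * C a k else 0) := by
      intro a
      by_cases ha : a = ri
      · subst ha; simp [hi]
      · have hai : C a i ≠ 0 := fun h0 => ha (hiu a h0)
        rcases h.2.2.2 a i with h1 | h1 | h1
        · exact absurd h1 hai
        · rw [h1]; simp [ha]
        · rw [h1]; simp [ha]
    simp only [key, Finset.sum_sub_distrib]
    rw [h.1 j k hjk, Finset.sum_ite_eq' univ ri (fun a => C a j * C a k)]
    simp

theorem stmt_11 {n m n₀ : ℕ} (C₁ C₂ : Matrix (Fin n) (Fin m) ℝ)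
    (h₁ : IsConferenceDesign C₁) (h₂ : IsConferenceDesign C₂)
    (i j k : Fin m) (hij : i ≠ j) (hik : i ≠ k) (hjk : j ≠ k) :
    |pearson (fun r => cOMARS C₁ C₂ n₀ r i * cOMARS C₁ C₂ n₀ r j)
        (fun r => cOMARS C₁ C₂ n₀ r i * cOMARS C₁ C₂ n₀ r k)| = 1 / ((n : ℝ) - 2) ∨
    |pearson (fun r => cOMARS C₁ C₂ n₀ r i * cOMARS C₁ C₂ n₀ r j)
        (fun r => cOMARS C₁ C₂ n₀ r i * cOMARS C₁ C₂ n₀ r k)| = 0 := by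
  -- n ≥ 3
  obtain ⟨ri, hri, _⟩ := h₁.2.1 i
  obtain ⟨rj, hrj, _⟩ := h₁.2.1 j
  obtain ⟨rk, hrk, _⟩ := h₁.2.1 k
  have hdij : ri ≠ rj := fun he => hij (h₁.2.2.1 ri i j hri (he ▸ hrj))
  have hdik : ri ≠ rk := fun he => hik (h₁.2.2.1 ri i k hri (he ▸ hrk))
  have hdjk : rj ≠ rk := fun he => hjk (h₁.2.2.1 rj j k hrj (he ▸ hrk))
  have h3n : 3 ≤ n := by
    have hc : ({ri, rj, rk} : Finset (Fin n)).card = 3 := by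
      rw [Finset.card_insert_of_notMem (by simp [hdij, hdik]),
        Finset.card_insert_of_notMem (by simpa using hdjk), Finset.card_singleton]
    have := Finset.card_le_univ ({ri, rj, rk} : Finset (Fin n))
    rw [hc, Fintype.card_fin] at this
    exact this
  have hn2 : (0 : ℝ) < (n : ℝ) - 2 := by
    have : (3 : ℝ) ≤ (n : ℝ) := by exact_mod_cast h3n
    linarith
  obtain ⟨e₁, he₁, hs₁⟩ := conf_cross h₁ hij hik hjk
  obtain ⟨e₂, he₂, hs₂⟩ := conf_cross h₂ hij hik hjk
  -- column sums
  have hSu : (∑ r, cOMARS C₁ C₂ n₀ r i * cOMARS C₁ C₂ n₀ r j) = 0 := by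
    simp [Fintype.sum_sum_type, cOMARS, foldover, neg_mul_neg, h₁.1 i j hij, h₂.1 i j hij]
  have hSv : (∑ r, cOMARS C₁ C₂ n₀ r i * cOMARS C₁ C₂ n₀ r k) = 0 := by
    simp [Fintype.sum_sum_type, cOMARS, foldover, neg_mul_neg, h₁.1 i k hik, h₂.1 i k hik]
  have hSuv : (∑ r, (cOMARS C₁ C₂ n₀ r i * cOMARS C₁ C₂ n₀ r j) *
      (cOMARS C₁ C₂ n₀ r i * cOMARS C₁ C₂ n₀ r k)) = 2 * e₁ + 2 * e₂ := by
    simp [Fintype.sum_sum_type, cOMARS, foldover, neg_mul_neg, hs₁, hs₂]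
    ring
  have hSuu : (∑ r, (cOMARS C₁ C₂ n₀ r i * cOMARS C₁ C₂ n₀ r j) ^ 2) = 4 * ((n : ℝ) - 2) := by
    simp [Fintype.sum_sum_type, cOMARS, foldover, neg_mul_neg, conf_sq_sum h₁ hij,
      conf_sq_sum h₂ hij]
    ring
  have hSvv : (∑ r, (cOMARS C₁ C₂ n₀ r i * cOMARS C₁ C₂ n₀ r k) ^ 2) = 4 * ((n : ℝ) - 2) := by
    simp [Fintype.sum_sum_type, cOMARS, foldover, neg_mul_neg, conf_sq_sum h₁ hik,
      conf_sq_sum h₂ hik]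
    ring
  have hsqrt : Real.sqrt (4 * ((n : ℝ) - 2)) * Real.sqrt (4 * ((n : ℝ) - 2))
      = 4 * ((n : ℝ) - 2) := Real.mul_self_sqrt (by linarith)
  have hpe : pearson (fun r => cOMARS C₁ C₂ n₀ r i * cOMARS C₁ C₂ n₀ r j)
      (fun r => cOMARS C₁ C₂ n₀ r i * cOMARS C₁ C₂ n₀ r k)
      = (2 * e₁ + 2 * e₂) / (4 * ((n : ℝ) - 2)) := by
    unfold pearson
    rw [hSuv, hSu, hSv, hSuu, hSvv]
    simp only [zero_mul, zero_div, sub_zero, ne_eq, OfNat.ofNat_ne_zero,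
      not_false_eq_true, zero_pow]
    rw [hsqrt]
  rw [hpe]
  rcases he₁ with rfl | rfl <;> rcases he₂ with rfl | rfl
  · left
    have h4 : (2 * (1:ℝ) + 2 * 1) / (4 * ((n:ℝ) - 2)) = 1 / ((n:ℝ) - 2) := by
      rw [div_eq_div_iff (by linarith) (by linarith)]; ring
    rw [h4, abs_of_pos (one_div_pos.mpr hn2)]
  · right; norm_num
  · right; norm_num
  · left
    have h4 : (2 * (-1:ℝ) + 2 * (-1)) / (4 * ((n:ℝ) - 2)) = (-1) / ((n:ℝ) - 2) := by
      rw [div_eq_div_iff (by linarith) (by linarith)]; ring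
    rw [h4, abs_div, abs_of_pos hn2]
    norm_num
end

section
/- Let a cOMARS design be constructed by concatenating two parent DSDs, each with 2n runs obtained by folding over an n×m conference design, where n ≡ 0 (mod 4). Then for any four distinct columns, the J4-characteristic (absolute sum of the entries of the corresponding four-factor interaction column) belongs to the set {4n − 8λ : λ = 2, 3, …, n/2}. -/
open Finset Filter

lemma sgn3 (u v w : ℤ) (hu : u = 1 ∨ u = -1) (hv : v = 1 ∨ v = -1)
    (hw : w = 1 ∨ w = -1) : (4:ℤ) ∣ (u*v + u*w + v*w - 3) := by
  rcases hu with rfl|rfl <;> rcases hv with rfl|rfl <;> rcases hw with rfl|rfl <;> norm_num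

lemma confJ4 {n m : ℕ} (C : Matrix (Fin n) (Fin m) ℝ) (h : IsConferenceDesign C)
    (hn4 : n % 4 = 0) (i j k l : Fin m) (hij : i ≠ j) (hik : i ≠ k) (hil : i ≠ l)
    (hjk : j ≠ k) (hjl : j ≠ l) (hkl : k ≠ l) :
    ∃ s : ℤ, (∑ r, C r i * C r j * C r k * C r l) = (s : ℝ) ∧
      (4:ℤ) ∣ s ∧ |s| ≤ (n:ℤ) - 4 ∧ 4 ≤ n := by
  obtain ⟨horth, hzero, hrow, hval⟩ := h
  set D : Fin n → Fin m → ℤ := fun r c => if C r c = 1 then 1 else if C r c = -1 then -1 else 0 with hDdef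
  have hcast : ∀ r c, ((D r c : ℤ) : ℝ) = C r c := by
    intro r c
    rcases hval r c with h|h|h <;> norm_num [hDdef, h]
  have hD0 : ∀ r c, D r c = 0 ↔ C r c = 0 := by
    intro r c
    rw [← hcast r c, Int.cast_eq_zero]
  have hDtri : ∀ r c, D r c = 0 ∨ D r c = 1 ∨ D r c = -1 := by
    intro r c
    simp only [hDdef]
    split_ifs <;> simp
  have hDpm : ∀ r c, C r c ≠ 0 → D r c = 1 ∨ D r c = -1 := by
    intro r c hc
    rcases hDtri r c with h0|h1|h2
    · exact absurd ((hD0 r c).mp h0) hc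
    · exact Or.inl h1
    · exact Or.inr h2
  have horthD : ∀ p q : Fin m, p ≠ q → ∑ r, D r p * D r q = 0 := by
    intro p q hpq
    have h0 := horth p q hpq
    have hc : ((∑ r, D r p * D r q : ℤ):ℝ) = 0 := by
      push_cast
      simp only [hcast]
      exact h0
    exact_mod_cast hc
  obtain ⟨ri, hri, hri'⟩ := hzero i
  obtain ⟨rj, hrj, hrj'⟩ := hzero j
  obtain ⟨rk, hrk, hrk'⟩ := hzero k
  obtain ⟨rl, hrl, hrl'⟩ := hzero l
  have hrij : ri ≠ rj := fun e => hij (hrow ri i j hri (by rw [e]; exact hrj))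
  have hrik : ri ≠ rk := fun e => hik (hrow ri i k hri (by rw [e]; exact hrk))
  have hril : ri ≠ rl := fun e => hil (hrow ri i l hri (by rw [e]; exact hrl))
  have hrjk : rj ≠ rk := fun e => hjk (hrow rj j k hrj (by rw [e]; exact hrk))
  have hrjl : rj ≠ rl := fun e => hjl (hrow rj j l hrj (by rw [e]; exact hrl))
  have hrkl : rk ≠ rl := fun e => hkl (hrow rk k l hrk (by rw [e]; exact hrl))
  -- the key congruence for a pairing
  have key : ∀ (p q s t : Fin m) (rp rq rs rt : Fin n),
      p ≠ q → s ≠ t → C rp p = 0 → C rq q = 0 → C rs s = 0 → C rt t = 0 →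
      (∀ y, C y p = 0 → y = rp) → (∀ y, C y q = 0 → y = rq) →
      (∀ y, C y s = 0 → y = rs) → (∀ y, C y t = 0 → y = rt) →
      rp ≠ rq → rp ≠ rs → rp ≠ rt → rq ≠ rs → rq ≠ rt → rs ≠ rt →
      (4:ℤ) ∣ (∑ r, D r p * D r q * (D r s * D r t)
        + (D rs p * D rs q + D rt p * D rt q + D rp s * D rp t + D rq s * D rq t)
        + (n:ℤ) - 4) := by
    intro p q s t rp rq rs rt hpq hst hCp hCq hCs hCt hup huq hus hut
      h1 h2 h3 h4 h5 h6
    set W : Finset (Fin n) := {rp, rq, rs, rt} with hWdef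
    have hW4 : W.card = 4 := by
      rw [hWdef, card_insert_of_notMem (by simp [h1, h2, h3]),
        card_insert_of_notMem (by simp [h4, h5]),
        card_insert_of_notMem (by simp [h6]), card_singleton]
    have hn4' : 4 ≤ n := by
      have := W.card_le_univ
      rw [hW4] at this
      simpa using this
    have hWc : Wᶜ.card = n - 4 := by
      rw [Finset.card_compl, hW4]
      simp
    have hDp0 : D rp p = 0 := (hD0 rp p).mpr hCp
    have hDq0 : D rq q = 0 := (hD0 rq q).mpr hCq
    have hDs0 : D rs s = 0 := (hD0 rs s).mpr hCs
    have hDt0 : D rt t = 0 := (hD0 rt t).mpr hCt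
    have hmemW : ∀ r : Fin n, r ∈ Wᶜ → r ≠ rp ∧ r ≠ rq ∧ r ≠ rs ∧ r ≠ rt := by
      intro r hr
      simp only [hWdef, Finset.mem_compl, Finset.mem_insert, Finset.mem_singleton] at hr
      push_neg at hr
      exact hr
    have hapm : ∀ r ∈ Wᶜ, D r p * D r q = 1 ∨ D r p * D r q = -1 := by
      intro r hr
      obtain ⟨e1, e2, _, _⟩ := hmemW r hr
      have hp := hDpm r p (fun hc => e1 (hup r hc))
      have hq := hDpm r q (fun hc => e2 (huq r hc))
      rcases hp with rfl'|rfl' <;> rcases hq with rfl''|rfl'' <;>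
        simp [rfl', rfl'']
    have hbpm : ∀ r ∈ Wᶜ, D r s * D r t = 1 ∨ D r s * D r t = -1 := by
      intro r hr
      obtain ⟨_, _, e3, e4⟩ := hmemW r hr
      have hp := hDpm r s (fun hc => e3 (hus r hc))
      have hq := hDpm r t (fun hc => e4 (hut r hc))
      rcases hp with rfl'|rfl' <;> rcases hq with rfl''|rfl'' <;>
        simp [rfl', rfl'']
    have hdvd : (4:ℤ) ∣ ∑ r ∈ Wᶜ, (1 - D r p * D r q) * (1 - D r s * D r t) := by
      apply Finset.dvd_sum
      intro r hr
      rcases hapm r hr with ha|ha <;> rcases hbpm r hr with hb|hb <;> norm_num [ha, hb]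
    have expand : ∑ r ∈ Wᶜ, (1 - D r p * D r q) * (1 - D r s * D r t)
        = (Wᶜ.card : ℤ) - (∑ r ∈ Wᶜ, D r p * D r q) - (∑ r ∈ Wᶜ, D r s * D r t)
          + ∑ r ∈ Wᶜ, D r p * D r q * (D r s * D r t) := by
      rw [Finset.sum_congr rfl (fun r _ => (by ring :
        (1 - D r p * D r q) * (1 - D r s * D r t)
          = 1 - D r p * D r q - D r s * D r t + D r p * D r q * (D r s * D r t)))]
      rw [Finset.sum_add_distrib, Finset.sum_sub_distrib, Finset.sum_sub_distrib,
        Finset.sum_const, nsmul_eq_mul, mul_one]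
    have hWsum_a : ∑ r ∈ W, D r p * D r q = D rs p * D rs q + D rt p * D rt q := by
      rw [hWdef, Finset.sum_insert (by simp [h1, h2, h3]),
        Finset.sum_insert (by simp [h4, h5]),
        Finset.sum_insert (by simp [h6]), Finset.sum_singleton, hDp0, hDq0]
      ring
    have hWsum_b : ∑ r ∈ W, D r s * D r t = D rp s * D rp t + D rq s * D rq t := by
      rw [hWdef, Finset.sum_insert (by simp [h1, h2, h3]),
        Finset.sum_insert (by simp [h4, h5]),
        Finset.sum_insert (by simp [h6]), Finset.sum_singleton, hDs0, hDt0]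
      ring
    have hWsum_ab : ∑ r ∈ W, D r p * D r q * (D r s * D r t) = 0 := by
      rw [hWdef, Finset.sum_insert (by simp [h1, h2, h3]),
        Finset.sum_insert (by simp [h4, h5]),
        Finset.sum_insert (by simp [h6]), Finset.sum_singleton, hDp0, hDq0, hDs0, hDt0]
      ring
    have hsplit_a := Finset.sum_add_sum_compl W (fun r => D r p * D r q)
    have hsplit_b := Finset.sum_add_sum_compl W (fun r => D r s * D r t)
    have hsplit_ab := Finset.sum_add_sum_compl W (fun r => D r p * D r q * (D r s * D r t))
    rw [hWsum_a, horthD p q hpq] at hsplit_a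
    rw [hWsum_b, horthD s t hst] at hsplit_b
    rw [hWsum_ab] at hsplit_ab
    have hcardZ : ((Wᶜ.card : ℕ) : ℤ) = (n:ℤ) - 4 := by
      rw [hWc]
      omega
    obtain ⟨c, hc⟩ := hdvd
    rw [expand, hcardZ] at hc
    exact ⟨c, by linarith⟩
  -- three pairings
  have e1 : ∑ r, D r i * D r j * (D r k * D r l) = ∑ r, D r i * D r j * D r k * D r l :=
    Finset.sum_congr rfl fun r _ => by ring
  have e2 : ∑ r, D r i * D r k * (D r j * D r l) = ∑ r, D r i * D r j * D r k * D r l :=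
    Finset.sum_congr rfl fun r _ => by ring
  have e3 : ∑ r, D r i * D r l * (D r j * D r k) = ∑ r, D r i * D r j * D r k * D r l :=
    Finset.sum_congr rfl fun r _ => by ring
  have K1 := key i j k l ri rj rk rl hij hkl hri hrj hrk hrl hri' hrj' hrk' hrl'
    hrij hrik hril hrjk hrjl hrkl
  have K2 := key i k j l ri rk rj rl hik hjl hri hrk hrj hrl hri' hrk' hrj' hrl'
    hrik hrij hril hrjk.symm hrkl hrjl
  have K3 := key i l j k ri rl rj rk hil hjk hri hrl hrj hrk hri' hrl' hrj' hrk'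
    hril hrij hrik hrjl.symm hrkl.symm hrjk
  rw [e1] at K1
  rw [e2] at K2
  rw [e3] at K3
  set S : ℤ := ∑ r, D r i * D r j * D r k * D r l with hSdef
  -- sign facts at zero rows
  have hsgn : ∀ (x y : Fin m) (rx : Fin n), C rx x = 0 → x ≠ y → D rx y = 1 ∨ D rx y = -1 := by
    intro x y rx hx hxy
    exact hDpm rx y (fun hc => hxy (hrow rx x y hx hc))
  have gi := sgn3 (D ri j) (D ri k) (D ri l) (hsgn i j ri hri hij) (hsgn i k ri hri hik)
    (hsgn i l ri hri hil)
  have gj := sgn3 (D rj i) (D rj k) (D rj l) (hsgn j i rj hrj hij.symm) (hsgn j k rj hrj hjk)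
    (hsgn j l rj hrj hjl)
  have gk := sgn3 (D rk i) (D rk j) (D rk l) (hsgn k i rk hrk hik.symm) (hsgn k j rk hrk hjk.symm)
    (hsgn k l rk hrk hkl)
  have gl := sgn3 (D rl i) (D rl j) (D rl k) (hsgn l i rl hrl hil.symm) (hsgn l j rl hrl hjl.symm)
    (hsgn l k rl hrl hkl.symm)
  have hnZ : (4:ℤ) ∣ (n:ℤ) := by omega
  have hdvdS : (4:ℤ) ∣ S := by
    obtain ⟨c1, hc1⟩ := K1
    obtain ⟨c2, hc2⟩ := K2
    obtain ⟨c3, hc3⟩ := K3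
    obtain ⟨d1, hd1⟩ := gi
    obtain ⟨d2, hd2⟩ := gj
    obtain ⟨d3, hd3⟩ := gk
    obtain ⟨d4, hd4⟩ := gl
    obtain ⟨e, he⟩ := hnZ
    exact ⟨3*(c1+c2+c3-d1-d2-d3-d4-3*e) - 2*S, by linarith⟩
  -- zero rows and bound
  have hZcard4 : ({ri, rj, rk, rl} : Finset (Fin n)).card = 4 := by
    rw [card_insert_of_notMem (by simp [hrij, hrik, hril]),
      card_insert_of_notMem (by simp [hrjk, hrjl]),
      card_insert_of_notMem (by simp [hrkl]), card_singleton]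
  have hn4'' : 4 ≤ n := by
    have := ({ri, rj, rk, rl} : Finset (Fin n)).card_le_univ
    rw [hZcard4] at this
    simpa using this
  have hvanish : ∀ r ∈ ({ri, rj, rk, rl} : Finset (Fin n)), D r i * D r j * D r k * D r l = 0 := by
    intro r hr
    simp only [Finset.mem_insert, Finset.mem_singleton] at hr
    rcases hr with rfl|rfl|rfl|rfl
    · simp [(hD0 r i).mpr hri]
    · simp [(hD0 r j).mpr hrj]
    · simp [(hD0 r k).mpr hrk]
    · simp [(hD0 r l).mpr hrl]
  have hSsplit : S = ∑ r ∈ ({ri, rj, rk, rl} : Finset (Fin n))ᶜ, D r i * D r j * D r k * D r l := by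
    rw [hSdef, ← Finset.sum_add_sum_compl ({ri, rj, rk, rl} : Finset (Fin n)),
      Finset.sum_eq_zero hvanish, zero_add]
  have habs1 : ∀ r : Fin n, |D r i * D r j * D r k * D r l| ≤ 1 := by
    intro r
    have h1 : ∀ c : Fin m, |D r c| ≤ 1 := by
      intro c
      rcases hDtri r c with h|h|h <;> simp [h]
    rw [abs_mul, abs_mul, abs_mul]
    have := h1 i; have := h1 j; have := h1 k; have := h1 l
    apply mul_le_one₀ (mul_le_one₀ (mul_le_one₀ (h1 i) (abs_nonneg _) (h1 j))
      (abs_nonneg _) (h1 k)) (abs_nonneg _) (h1 l)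
  have hbound : |S| ≤ (n:ℤ) - 4 := by
    rw [hSsplit]
    calc |∑ r ∈ ({ri, rj, rk, rl} : Finset (Fin n))ᶜ, D r i * D r j * D r k * D r l|
        ≤ ∑ r ∈ ({ri, rj, rk, rl} : Finset (Fin n))ᶜ, |D r i * D r j * D r k * D r l| :=
          Finset.abs_sum_le_sum_abs _ _
      _ ≤ ∑ _r ∈ ({ri, rj, rk, rl} : Finset (Fin n))ᶜ, (1:ℤ) :=
          Finset.sum_le_sum fun r _ => habs1 r
      _ = (({ri, rj, rk, rl} : Finset (Fin n))ᶜ.card : ℤ) := by simp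
      _ ≤ (n:ℤ) - 4 := by
          rw [Finset.card_compl, hZcard4]
          simp
          omega
  refine ⟨S, ?_, hdvdS, hbound, hn4''⟩
  rw [hSdef]
  push_cast
  simp only [hcast]

theorem stmt_12 {n m n₀ : ℕ} (C₁ C₂ : Matrix (Fin n) (Fin m) ℝ)
    (h₁ : IsConferenceDesign C₁) (h₂ : IsConferenceDesign C₂)
    (hn4 : n % 4 = 0)
    (i j k l : Fin m) (hij : i ≠ j) (hik : i ≠ k) (hil : i ≠ l)
    (hjk : j ≠ k) (hjl : j ≠ l) (hkl : k ≠ l) :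
    ∃ lam : ℕ, 2 ≤ lam ∧ lam ≤ n / 2 ∧
      |∑ r, cOMARS C₁ C₂ n₀ r i * cOMARS C₁ C₂ n₀ r j *
          cOMARS C₁ C₂ n₀ r k * cOMARS C₁ C₂ n₀ r l|
        = 4 * (n : ℝ) - 8 * (lam : ℝ) := by
  obtain ⟨s₁, hs₁, hd₁, hb₁, hn4'⟩ := confJ4 C₁ h₁ hn4 i j k l hij hik hil hjk hjl hkl
  obtain ⟨s₂, hs₂, hd₂, hb₂, _⟩ := confJ4 C₂ h₂ hn4 i j k l hij hik hil hjk hjl hkl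
  have hsum : (∑ r, cOMARS C₁ C₂ n₀ r i * cOMARS C₁ C₂ n₀ r j *
      cOMARS C₁ C₂ n₀ r k * cOMARS C₁ C₂ n₀ r l)
      = 2 * (∑ a, C₁ a i * C₁ a j * C₁ a k * C₁ a l)
        + 2 * (∑ a, C₂ a i * C₂ a j * C₂ a k * C₂ a l) := by
    simp [cOMARS, foldover, Fintype.sum_sum_type, neg_mul, mul_neg, neg_neg]
    ring
  set M : ℤ := s₁ + s₂ with hMdef
  have hdM : (4:ℤ) ∣ M := dvd_add hd₁ hd₂
  have hbM : |M| ≤ 2 * (n:ℤ) - 8 := by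
    calc |M| ≤ |s₁| + |s₂| := abs_add_le _ _
      _ ≤ 2 * (n:ℤ) - 8 := by linarith
  set t : ℕ := M.natAbs with htdef
  have ht : (t : ℤ) = |M| := (Int.abs_eq_natAbs M).symm
  have ht4 : (4:ℕ) ∣ t := by
    have := Int.natAbs_dvd_natAbs.mpr hdM
    simpa using this
  have htle : t ≤ 2 * n - 8 := by omega
  have hn4n : (4:ℕ) ∣ n := by omega
  refine ⟨(2 * n - t) / 4, by omega, by omega, ?_⟩
  have h8 : 8 * ((2 * n - t) / 4) + 2 * t = 4 * n := by omega
  have hcast2 : (2 * (s₁:ℝ)) + 2 * (s₂:ℝ) = ((2 * M : ℤ) : ℝ) := by push_cast [hMdef]; ring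
  rw [hsum, hs₁, hs₂, hcast2, ← Int.cast_abs]
  have habs2 : |(2 * M : ℤ)| = (2 * t : ℤ) := by
    rw [abs_mul, ← ht]
    norm_num
  rw [habs2]
  have h8' : (8:ℝ) * ((2 * n - t) / 4 : ℕ) + 2 * (t:ℝ) = 4 * (n:ℝ) := by exact_mod_cast h8
  push_cast
  linarith
end

section
/- Let a cOMARS design be constructed by concatenating two parent DSDs, each with 2n runs obtained by folding over an n×m conference design, where n ≡ 2 (mod 4). Then for any four distinct columns, the J4-characteristic belongs to the set {16λ : λ = 0, 1, …, (n−6)/4} ∪ {4n − 16(λ+1) : λ = 0, 1, …, (n−6)/4}. -/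
open Finset Filter

lemma pm_sum_prod {α : Type*} [DecidableEq α] (T : Finset α) (f : α → ℝ)
    (h : ∀ r ∈ T, f r = 1 ∨ f r = -1) :
    ∃ N : ℕ, N ≤ T.card ∧ ∑ r ∈ T, f r = T.card - 2 * N ∧ ∏ r ∈ T, f r = (-1) ^ N := by
  classical
  refine ⟨(T.filter (fun r => f r = -1)).card, Finset.card_filter_le _ _, ?_, ?_⟩
  · have hsplit := Finset.sum_filter_add_sum_filter_not T (fun r => f r = -1) f
    have h1 : ∑ r ∈ T.filter (fun r => f r = -1), f r
        = -((T.filter (fun r => f r = -1)).card : ℝ) := by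
      rw [Finset.sum_congr rfl (fun r hr => (Finset.mem_filter.1 hr).2)]
      simp
    have h2 : ∑ r ∈ T.filter (fun r => ¬ f r = -1), f r
        = ((T.filter (fun r => ¬ f r = -1)).card : ℝ) := by
      rw [Finset.sum_congr rfl (fun r hr => show f r = 1 by
        have := Finset.mem_filter.1 hr
        rcases h r this.1 with h' | h'
        · exact h'
        · exact absurd h' this.2)]
      simp
    have hc := Finset.card_filter_add_card_filter_not (s := T)
      (p := fun r => f r = -1)
    rw [← hsplit, h1, h2]
    have : ((T.filter (fun r => ¬ f r = -1)).card : ℝ)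
        = (T.card : ℝ) - (T.filter (fun r => f r = -1)).card := by
      have := hc
      push_cast [← this]
      ring
    rw [this]; ring
  · have hsplit := Finset.prod_filter_mul_prod_filter_not T (fun r => f r = -1) f
    have h1 : ∏ r ∈ T.filter (fun r => f r = -1), f r
        = (-1 : ℝ) ^ (T.filter (fun r => f r = -1)).card := by
      rw [Finset.prod_congr rfl (fun r hr => (Finset.mem_filter.1 hr).2)]
      simp
    have h2 : ∏ r ∈ T.filter (fun r => ¬ f r = -1), f r = 1 := by
      rw [Finset.prod_congr rfl (fun r hr => show f r = 1 by
        have := Finset.mem_filter.1 hr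
        rcases h r this.1 with h' | h'
        · exact h'
        · exact absurd h' this.2), Finset.prod_const_one]
    rw [← hsplit, h1, h2, mul_one]

set_option maxHeartbeats 2000000 in
lemma conf_key {n m : ℕ} (C : Matrix (Fin n) (Fin m) ℝ) (hC : IsConferenceDesign C)
    (hn4 : n % 4 = 2)
    (i j k l : Fin m) (hij : i ≠ j) (hik : i ≠ k) (hil : i ≠ l)
    (hjk : j ≠ k) (hjl : j ≠ l) (hkl : k ≠ l) :
    6 ≤ n ∧ ∃ b : ℕ, 2 * b + 4 ≤ n ∧
      ∑ r, C r i * C r j * C r k * C r l = (n : ℝ) - 4 - 4 * b := by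
  classical
  obtain ⟨horth, hzero, hrow, hentry⟩ := hC
  obtain ⟨zi, hzi, hziu⟩ := hzero i
  obtain ⟨zj, hzj, hzju⟩ := hzero j
  obtain ⟨zk, hzk, hzku⟩ := hzero k
  obtain ⟨zl, hzl, hzlu⟩ := hzero l
  -- nonzero entries are ±1
  have hpm : ∀ (r : Fin n) (a : Fin m) (za : Fin n), (∀ y, C y a = 0 → y = za) →
      r ≠ za → (C r a = 1 ∨ C r a = -1) := by
    intro r a za hu hne
    rcases hentry r a with h | h | h
    · exact absurd (hu r h) hne
    · exact Or.inl h
    · exact Or.inr h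
  -- the zero rows are pairwise distinct
  have hzij : zi ≠ zj := fun h => hij (hrow zi i j hzi (h ▸ hzj))
  have hzik : zi ≠ zk := fun h => hik (hrow zi i k hzi (h ▸ hzk))
  have hzil : zi ≠ zl := fun h => hil (hrow zi i l hzi (h ▸ hzl))
  have hzjk : zj ≠ zk := fun h => hjk (hrow zj j k hzj (h ▸ hzk))
  have hzjl : zj ≠ zl := fun h => hjl (hrow zj j l hzj (h ▸ hzl))
  have hzkl : zk ≠ zl := fun h => hkl (hrow zk k l hzk (h ▸ hzl))
  have hmul2 : ∀ x y : ℝ, (x = 1 ∨ x = -1) → (y = 1 ∨ y = -1) →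
      (x * y = 1 ∨ x * y = -1) := by rintro x y (rfl | rfl) (rfl | rfl) <;> norm_num
  have hsq : ∀ x : ℝ, (x = 1 ∨ x = -1) → x * x = 1 := by
    rintro x (rfl | rfl) <;> norm_num
  -- product over all rows avoiding the two zero rows of a pair of columns is 1
  have pairProd : ∀ (a b : Fin m) (za zb : Fin n), a ≠ b →
      C za a = 0 → (∀ y, C y a = 0 → y = za) →
      C zb b = 0 → (∀ y, C y b = 0 → y = zb) →
      ∏ r ∈ (univ \ {za, zb} : Finset (Fin n)), C r a * C r b = 1 := by
    intro a b za zb hab h0a hua h0b hub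
    have hzab : za ≠ zb := fun h => hab (hrow za a b h0a (h ▸ h0b))
    set T : Finset (Fin n) := univ \ {za, zb} with hT
    have hTpm : ∀ r ∈ T, C r a * C r b = 1 ∨ C r a * C r b = -1 := by
      intro r hr
      simp only [hT, Finset.mem_sdiff, mem_univ, mem_insert, mem_singleton, true_and] at hr
      push_neg at hr
      exact hmul2 _ _ (hpm r a za hua hr.1) (hpm r b zb hub hr.2)
    obtain ⟨N, hNle, hNsum, hNprod⟩ := pm_sum_prod T (fun r => C r a * C r b) hTpm
    have hTcard : T.card = n - 2 := by
      rw [hT, card_sdiff_of_subset (subset_univ _), card_univ, Fintype.card_fin, card_pair hzab]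
    have hsum0 : ∑ r ∈ T, C r a * C r b = 0 := by
      rw [Finset.sum_subset (subset_univ T)]
      · exact horth a b hab
      · intro x _ hx
        simp only [hT, Finset.mem_sdiff, mem_univ, mem_insert, mem_singleton, true_and, not_not] at hx
        rcases hx with h | h
        · rw [h, h0a, zero_mul]
        · rw [h, h0b, mul_zero]
    have hn2 : 2 ≤ n := by
      have : ({za, zb} : Finset (Fin n)).card ≤ n := by
        simpa [card_pair hzab, card_univ] using card_le_card (subset_univ ({za, zb} : Finset (Fin n)))
      omega
    have hNnat : 2 * N + 2 = n := by
      have : (0 : ℝ) = ((n - 2 : ℕ) : ℝ) - 2 * N := by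
        rw [← hsum0, hNsum, hTcard]
      have h2 : ((2 : ℕ) * N + 2 : ℕ) = ((n - 2 : ℕ) + 2 : ℕ) := by
        have := this
        push_cast at this
        have : (2 * N : ℝ) + 2 = ((n - 2 : ℕ) : ℝ) + 2 := by linarith
        exact_mod_cast this
      omega
    have hNeven : Even N := ⟨N / 2, by omega⟩
    rw [hNprod]
    exact hNeven.neg_one_pow
  -- product over rows avoiding all four zero rows, for one pair of columns
  have prodR : ∀ (a b : Fin m) (za zb zc zd : Fin n), a ≠ b →
      C za a = 0 → (∀ y, C y a = 0 → y = za) →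
      C zb b = 0 → (∀ y, C y b = 0 → y = zb) →
      zc ≠ za → zc ≠ zb → zd ≠ za → zd ≠ zb → zc ≠ zd →
      ∏ r ∈ ((univ \ {za, zb}) \ {zc, zd} : Finset (Fin n)), C r a * C r b
        = (C zc a * C zc b) * (C zd a * C zd b) := by
    intro a b za zb zc zd hab h0a hua h0b hub hca hcb hda hdb hcd
    set T : Finset (Fin n) := univ \ {za, zb} with hT
    have hcT : zc ∈ T := by simp [hT, hca, hcb]
    have hdT : zd ∈ T \ {zc} := by simp [hT, hda, hdb, hcd.symm]
    have hsplit1 := Finset.prod_eq_mul_prod_sdiff_singleton_of_mem hcT (fun r => C r a * C r b)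
    have hsplit2 := Finset.prod_eq_mul_prod_sdiff_singleton_of_mem hdT (fun r => C r a * C r b)
    have hset : (T \ {zc}) \ {zd} = T \ {zc, zd} := by
      ext r; simp only [Finset.mem_sdiff, mem_insert, mem_singleton]; tauto
    have hone : (C zc a * C zc b) * ((C zd a * C zd b) *
        ∏ r ∈ T \ {zc, zd}, C r a * C r b) = 1 := by
      rw [← hset, ← hsplit2, ← hsplit1]
      exact pairProd a b za zb hab h0a hua h0b hub
    have hc1 : (C zc a * C zc b) * (C zc a * C zc b) = 1 :=
      hsq _ (hmul2 _ _ (hpm zc a za hua hca) (hpm zc b zb hub hcb))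
    have hd1 : (C zd a * C zd b) * (C zd a * C zd b) = 1 :=
      hsq _ (hmul2 _ _ (hpm zd a za hua hda) (hpm zd b zb hub hdb))
    calc ∏ r ∈ T \ {zc, zd}, C r a * C r b
        = ((C zc a * C zc b) * (C zc a * C zc b)) *
          (((C zd a * C zd b) * (C zd a * C zd b)) *
            ∏ r ∈ T \ {zc, zd}, C r a * C r b) := by rw [hc1, hd1]; ring
      _ = ((C zc a * C zc b) * ((C zd a * C zd b) *
            ∏ r ∈ T \ {zc, zd}, C r a * C r b)) *
          ((C zc a * C zc b) * (C zd a * C zd b)) := by ring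
      _ = 1 * ((C zc a * C zc b) * (C zd a * C zd b)) := by rw [hone]
      _ = (C zc a * C zc b) * (C zd a * C zd b) := one_mul _
  -- the common index set
  set R : Finset (Fin n) := univ \ {zi, zj, zk, zl} with hR
  have hRij : R = (univ \ {zi, zj}) \ {zk, zl} := by
    ext r; simp only [hR, Finset.mem_sdiff, mem_univ, mem_insert, mem_singleton, true_and]; tauto
  have hRik : R = (univ \ {zi, zk}) \ {zj, zl} := by
    ext r; simp only [hR, Finset.mem_sdiff, mem_univ, mem_insert, mem_singleton, true_and]; tauto
  have hRil : R = (univ \ {zi, zl}) \ {zj, zk} := by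
    ext r; simp only [hR, Finset.mem_sdiff, mem_univ, mem_insert, mem_singleton, true_and]; tauto
  have hRpm : ∀ r ∈ R, C r i * C r j * C r k * C r l = 1 ∨
      C r i * C r j * C r k * C r l = -1 := by
    intro r hr
    simp only [hR, Finset.mem_sdiff, mem_univ, mem_insert, mem_singleton, true_and, not_or] at hr
    exact hmul2 _ _ (hmul2 _ _ (hmul2 _ _ (hpm r i zi hziu hr.1) (hpm r j zj hzju hr.2.1))
      (hpm r k zk hzku hr.2.2.1)) (hpm r l zl hzlu hr.2.2.2)
  obtain ⟨N, hNle, hNsum, hNprod⟩ :=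
    pm_sum_prod R (fun r => C r i * C r j * C r k * C r l) hRpm
  have hcard4 : ({zi, zj, zk, zl} : Finset (Fin n)).card = 4 := by
    rw [card_insert_of_notMem (by simp [hzij, hzik, hzil]),
      card_insert_of_notMem (by simp [hzjk, hzjl]), card_pair hzkl]
  have hn4le : 4 ≤ n := by
    have := card_le_card (subset_univ ({zi, zj, zk, zl} : Finset (Fin n)))
    rw [hcard4, card_univ, Fintype.card_fin] at this
    exact this
  have hn6 : 6 ≤ n := by omega
  have hRcard : R.card = n - 4 := by
    rw [hR, card_sdiff_of_subset (subset_univ _), card_univ, Fintype.card_fin, hcard4]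
  -- the three pairing evaluations of the product over R
  have hQ1 : ∏ r ∈ R, C r i * C r j * C r k * C r l
      = ((C zk i * C zk j) * (C zl i * C zl j)) *
        ((C zi k * C zi l) * (C zj k * C zj l)) := by
    have : ∀ r, C r i * C r j * C r k * C r l = (C r i * C r j) * (C r k * C r l) := by
      intro r; ring
    rw [Finset.prod_congr rfl (fun r _ => this r), Finset.prod_mul_distrib]
    rw [hRij]
    rw [prodR i j zi zj zk zl hij hzi hziu hzj hzju hzik.symm hzjk.symm hzil.symm hzjl.symm hzkl]
    have h2 := prodR k l zk zl zi zj hkl hzk hzku hzl hzlu hzik hzil hzjk hzjl hzij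
    have hset2 : (univ \ {zi, zj}) \ {zk, zl} = (univ \ {zk, zl}) \ {zi, zj} := by
      ext r; simp only [Finset.mem_sdiff, mem_univ, mem_insert, mem_singleton, true_and]; tauto
    rw [hset2, h2]
  have hQ2 : ∏ r ∈ R, C r i * C r j * C r k * C r l
      = ((C zj i * C zj k) * (C zl i * C zl k)) *
        ((C zi j * C zi l) * (C zk j * C zk l)) := by
    have : ∀ r, C r i * C r j * C r k * C r l = (C r i * C r k) * (C r j * C r l) := by
      intro r; ring
    rw [Finset.prod_congr rfl (fun r _ => this r), Finset.prod_mul_distrib]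
    rw [hRik]
    rw [prodR i k zi zk zj zl hik hzi hziu hzk hzku hzij.symm hzjk hzil.symm hzkl.symm hzjl]
    have h2 := prodR j l zj zl zi zk hjl hzj hzju hzl hzlu hzij hzil hzjk.symm hzkl hzik
    have hset2 : (univ \ {zi, zk}) \ {zj, zl} = (univ \ {zj, zl}) \ {zi, zk} := by
      ext r; simp only [Finset.mem_sdiff, mem_univ, mem_insert, mem_singleton, true_and]; tauto
    rw [hset2, h2]
  have hQ3 : ∏ r ∈ R, C r i * C r j * C r k * C r l
      = ((C zj i * C zj l) * (C zk i * C zk l)) *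
        ((C zi j * C zi k) * (C zl j * C zl k)) := by
    have : ∀ r, C r i * C r j * C r k * C r l = (C r i * C r l) * (C r j * C r k) := by
      intro r; ring
    rw [Finset.prod_congr rfl (fun r _ => this r), Finset.prod_mul_distrib]
    rw [hRil]
    rw [prodR i l zi zl zj zk hil hzi hziu hzl hzlu hzij.symm hzjl hzik.symm hzkl hzjk]
    have h2 := prodR j k zj zk zi zl hjk hzj hzju hzk hzku hzij hzik hzjl.symm hzkl.symm hzil
    have hset2 : (univ \ {zi, zl}) \ {zj, zk} = (univ \ {zj, zk}) \ {zi, zl} := by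
      ext r; simp only [Finset.mem_sdiff, mem_univ, mem_insert, mem_singleton, true_and]; tauto
    rw [hset2, h2]
  -- the product over R is 1
  have hP2 : (∏ r ∈ R, C r i * C r j * C r k * C r l) *
      (∏ r ∈ R, C r i * C r j * C r k * C r l) = 1 := by
    rw [hNprod, ← mul_pow]; norm_num
  have h23 : (((C zj i * C zj k) * (C zl i * C zl k)) *
        ((C zi j * C zi l) * (C zk j * C zk l))) *
      (((C zj i * C zj l) * (C zk i * C zk l)) *
        ((C zi j * C zi k) * (C zl j * C zl k))) = 1 := by
    rw [← hQ2, ← hQ3]; exact hP2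
  have ha1 : C zi j * C zi j = 1 := hsq _ (hpm zi j zj hzju hzij)
  have ha2 : C zi k * C zi k = 1 := hsq _ (hpm zi k zk hzku hzik)
  have ha3 : C zi l * C zi l = 1 := hsq _ (hpm zi l zl hzlu hzil)
  have hb1 : C zj i * C zj i = 1 := hsq _ (hpm zj i zi hziu hzij.symm)
  have hb2 : C zj k * C zj k = 1 := hsq _ (hpm zj k zk hzku hzjk)
  have hb3 : C zj l * C zj l = 1 := hsq _ (hpm zj l zl hzlu hzjl)
  have hc1 : C zk i * C zk i = 1 := hsq _ (hpm zk i zi hziu hzik.symm)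
  have hc2 : C zk j * C zk j = 1 := hsq _ (hpm zk j zj hzju hzjk.symm)
  have hc3 : C zk l * C zk l = 1 := hsq _ (hpm zk l zl hzlu hzkl)
  have hd1 : C zl i * C zl i = 1 := hsq _ (hpm zl i zi hziu hzil.symm)
  have hd2 : C zl j * C zl j = 1 := hsq _ (hpm zl j zj hzju hzjl.symm)
  have hd3 : C zl k * C zl k = 1 := hsq _ (hpm zl k zk hzku hzkl.symm)
  have hQQQ : (((C zk i * C zk j) * (C zl i * C zl j)) *
        ((C zi k * C zi l) * (C zj k * C zj l))) *
      ((((C zj i * C zj k) * (C zl i * C zl k)) *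
        ((C zi j * C zi l) * (C zk j * C zk l))) *
      (((C zj i * C zj l) * (C zk i * C zk l)) *
        ((C zi j * C zi k) * (C zl j * C zl k)))) = 1 := by
    calc (((C zk i * C zk j) * (C zl i * C zl j)) *
        ((C zi k * C zi l) * (C zj k * C zj l))) *
      ((((C zj i * C zj k) * (C zl i * C zl k)) *
        ((C zi j * C zi l) * (C zk j * C zk l))) *
      (((C zj i * C zj l) * (C zk i * C zk l)) *
        ((C zi j * C zi k) * (C zl j * C zl k))))
        = (C zi j * C zi j) * ((C zi k * C zi k) * ((C zi l * C zi l) *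
          ((C zj i * C zj i) * ((C zj k * C zj k) * ((C zj l * C zj l) *
          ((C zk i * C zk i) * ((C zk j * C zk j) * ((C zk l * C zk l) *
          ((C zl i * C zl i) * ((C zl j * C zl j) * (C zl k * C zl k))))))))))) := by
          ring
      _ = 1 := by
          rw [ha1, ha2, ha3, hb1, hb2, hb3, hc1, hc2, hc3, hd1, hd2, hd3]; norm_num
  have hPone : ∏ r ∈ R, C r i * C r j * C r k * C r l = 1 := by
    calc ∏ r ∈ R, C r i * C r j * C r k * C r l
        = ((C zk i * C zk j) * (C zl i * C zl j)) *
          ((C zi k * C zi l) * (C zj k * C zj l)) := hQ1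
      _ = (((C zk i * C zk j) * (C zl i * C zl j)) *
          ((C zi k * C zi l) * (C zj k * C zj l))) *
          ((((C zj i * C zj k) * (C zl i * C zl k)) *
            ((C zi j * C zi l) * (C zk j * C zk l))) *
          (((C zj i * C zj l) * (C zk i * C zk l)) *
            ((C zi j * C zi k) * (C zl j * C zl k)))) := by rw [h23, mul_one]
      _ = 1 := hQQQ
  have hNeven : Even N := by
    by_contra hodd
    rw [hNprod, (Nat.not_even_iff_odd.1 hodd).neg_one_pow] at hPone
    norm_num at hPone
  obtain ⟨c, hc⟩ := hNeven
  have hsum : ∑ r, C r i * C r j * C r k * C r l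
      = ∑ r ∈ R, C r i * C r j * C r k * C r l := by
    refine (Finset.sum_subset (subset_univ R) ?_).symm
    intro x _ hx
    simp only [hR, Finset.mem_sdiff, mem_univ, mem_insert, mem_singleton, true_and, not_not] at hx
    rcases Decidable.em (x = zi) with h | h1
    · rw [h, hzi]; ring
    rcases Decidable.em (x = zj) with h | h2
    · rw [h, hzj]; ring
    rcases Decidable.em (x = zk) with h | h3
    · rw [h, hzk]; ring
    have h : x = zl := by tauto
    rw [h, hzl]; ring
    
  refine ⟨hn6, c, by omega, ?_⟩
  rw [hsum, hNsum, hRcard, hc]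
  push_cast [Nat.cast_sub hn4le]
  ring


theorem stmt_13 {n m n₀ : ℕ} (C₁ C₂ : Matrix (Fin n) (Fin m) ℝ)
    (h₁ : IsConferenceDesign C₁) (h₂ : IsConferenceDesign C₂)
    (hn4 : n % 4 = 2)
    (i j k l : Fin m) (hij : i ≠ j) (hik : i ≠ k) (hil : i ≠ l)
    (hjk : j ≠ k) (hjl : j ≠ l) (hkl : k ≠ l) :
    ∃ lam : ℕ, lam ≤ (n - 6) / 4 ∧
      (|∑ r, cOMARS C₁ C₂ n₀ r i * cOMARS C₁ C₂ n₀ r j *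
          cOMARS C₁ C₂ n₀ r k * cOMARS C₁ C₂ n₀ r l| = 16 * (lam : ℝ) ∨
       |∑ r, cOMARS C₁ C₂ n₀ r i * cOMARS C₁ C₂ n₀ r j *
          cOMARS C₁ C₂ n₀ r k * cOMARS C₁ C₂ n₀ r l|
         = 4 * (n : ℝ) - 16 * ((lam : ℝ) + 1)) := by
  obtain ⟨hn6, b₁, hb₁, hs₁⟩ := conf_key C₁ h₁ hn4 i j k l hij hik hil hjk hjl hkl
  obtain ⟨-, b₂, hb₂, hs₂⟩ := conf_key C₂ h₂ hn4 i j k l hij hik hil hjk hjl hkl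
  have htot : ∑ r, cOMARS C₁ C₂ n₀ r i * cOMARS C₁ C₂ n₀ r j *
      cOMARS C₁ C₂ n₀ r k * cOMARS C₁ C₂ n₀ r l
      = 4 * (n : ℝ) - 16 - 8 * ((b₁ : ℝ) + (b₂ : ℝ)) := by
    rw [Fintype.sum_sum_type, Fintype.sum_sum_type, Fintype.sum_sum_type,
      Fintype.sum_sum_type]
    simp only [cOMARS, foldover]
    have hneg : ∀ (C : Matrix (Fin n) (Fin m) ℝ) (a : Fin n),
        (-C a i) * (-C a j) * (-C a k) * (-C a l)
          = C a i * C a j * C a k * C a l := by intro C a; ring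
    rw [Finset.sum_congr rfl (fun a _ => hneg C₁ a),
      Finset.sum_congr rfl (fun a _ => hneg C₂ a), hs₁, hs₂]
    simp only [mul_zero, zero_mul, Finset.sum_const_zero]
    ring
  rw [htot]
  by_cases hcs : 8 * (b₁ + b₂) + 16 ≤ 4 * n
  · have hnn : (0 : ℝ) ≤ 4 * (n : ℝ) - 16 - 8 * ((b₁ : ℝ) + (b₂ : ℝ)) := by
      have : ((8 * (b₁ + b₂) + 16 : ℕ) : ℝ) ≤ ((4 * n : ℕ) : ℝ) := by exact_mod_cast hcs
      push_cast at this
      linarith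
    rw [abs_of_nonneg hnn]
    rcases Nat.even_or_odd (b₁ + b₂) with ⟨c, hcc⟩ | ⟨c, hcc⟩
    · refine ⟨c, by omega, Or.inr ?_⟩
      have : (b₁ : ℝ) + (b₂ : ℝ) = (c : ℝ) + (c : ℝ) := by exact_mod_cast congrArg (Nat.cast (R := ℝ)) hcc
      rw [this]; ring
    · refine ⟨n / 4 - 1 - c, by omega, Or.inl ?_⟩
      have hnat : 16 * (n / 4 - 1 - c) + 24 + 16 * c = 4 * n := by omega
      have hr : (16 * ((n / 4 - 1 - c : ℕ) : ℝ)) + 24 + 16 * (c : ℝ) = 4 * (n : ℝ) := by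
        exact_mod_cast congrArg (Nat.cast (R := ℝ)) hnat
      have hbc : (b₁ : ℝ) + (b₂ : ℝ) = 2 * (c : ℝ) + 1 := by exact_mod_cast congrArg (Nat.cast (R := ℝ)) hcc
      rw [hbc]; linarith
  · have hneg' : 4 * (n : ℝ) - 16 - 8 * ((b₁ : ℝ) + (b₂ : ℝ)) ≤ 0 := by
      have h' : 4 * n ≤ 8 * (b₁ + b₂) + 16 := by omega
      have : ((4 * n : ℕ) : ℝ) ≤ ((8 * (b₁ + b₂) + 16 : ℕ) : ℝ) := by exact_mod_cast h'
      push_cast at this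
      linarith
    rw [abs_of_nonpos hneg']
    rcases Nat.even_or_odd (b₁ + b₂) with ⟨c, hcc⟩ | ⟨c, hcc⟩
    · refine ⟨2 * (n / 4) - 1 - c, by omega, Or.inr ?_⟩
      have hnat : 8 * (b₁ + b₂) + 16 + 16 * (2 * (n / 4) - 1 - c) + 16 = 8 * n := by omega
      have hr : 8 * ((b₁ : ℝ) + (b₂ : ℝ)) + 16 + 16 * ((2 * (n / 4) - 1 - c : ℕ) : ℝ) + 16
          = 8 * (n : ℝ) := by exact_mod_cast congrArg (Nat.cast (R := ℝ)) hnat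
      linarith
    · refine ⟨c + 1 - n / 4, by omega, Or.inl ?_⟩
      have hnat : 16 * (c + 1 - n / 4) + 4 * n = 8 * (b₁ + b₂) + 16 := by omega
      have hr : 16 * ((c + 1 - n / 4 : ℕ) : ℝ) + 4 * (n : ℝ)
          = 8 * ((b₁ : ℝ) + (b₂ : ℝ)) + 16 := by exact_mod_cast congrArg (Nat.cast (R := ℝ)) hnat
      linarith
end

section
/- In a cOMARS design built from two foldovers of n×m conference designs with n ≡ 0 (mod 4), the absolute correlation between two two-factor interaction columns involving four distinct factors belongs to the set {(n − 2λ)/(n − 2) : λ = 2, 3, …, n/2}; equivalently, it equals the J4-characteristic divided by the number of nonzero entries of the corresponding four-factor interaction column. -/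
open Finset Filter

set_option maxHeartbeats 1000000

lemma pm_mul {u v : ℤ} (h : u = 1 ∨ u = -1) (h' : v = 1 ∨ v = -1) :
    u * v = 1 ∨ u * v = -1 := by
  rcases h with h | h <;> rcases h' with h' | h' <;> simp [h, h']

lemma triple_dvd {u v t : ℤ} (hu : u = 1 ∨ u = -1) (hv : v = 1 ∨ v = -1)
    (ht : t = 1 ∨ t = -1) : (4 : ℤ) ∣ (v * t + u * t + u * v + 1) := by
  rcases hu with h | h <;> rcases hv with h' | h' <;> rcases ht with h'' | h'' <;> simp [h, h', h'']

lemma key {n : ℕ} (x y z w : Fin n → ℤ)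
    (hx1 : ∀ r, x r = 0 ∨ x r = 1 ∨ x r = -1)
    (hy1 : ∀ r, y r = 0 ∨ y r = 1 ∨ y r = -1)
    (hz1 : ∀ r, z r = 0 ∨ z r = 1 ∨ z r = -1)
    (hw1 : ∀ r, w r = 0 ∨ w r = 1 ∨ w r = -1)
    (a b c d : Fin n)
    (ha : ∀ r, x r = 0 ↔ r = a) (hb : ∀ r, y r = 0 ↔ r = b)
    (hc : ∀ r, z r = 0 ↔ r = c) (hd : ∀ r, w r = 0 ↔ r = d)
    (hab : a ≠ b) (hac : a ≠ c) (had : a ≠ d)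
    (hbc : b ≠ c) (hbd : b ≠ d) (hcd : c ≠ d)
    (oxy : ∑ r, x r * y r = 0) (oxz : ∑ r, x r * z r = 0) (oxw : ∑ r, x r * w r = 0)
    (oyz : ∑ r, y r * z r = 0) (oyw : ∑ r, y r * w r = 0) (ozw : ∑ r, z r * w r = 0)
    (hn4 : n % 4 = 0) :
    4 ∣ (∑ r, x r * y r * z r * w r) ∧
      (∑ r, x r * y r * z r * w r).natAbs ≤ n - 4 ∧ 4 ≤ n := by
  classical
  set s : Finset (Fin n) := insert a (insert b (insert c {d})) with hs
  have hnas : a ∉ insert b (insert c ({d} : Finset (Fin n))) := by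
    simp [hab, hac, had]
  have hnbs : b ∉ insert c ({d} : Finset (Fin n)) := by simp [hbc, hbd]
  have hncs : c ∉ ({d} : Finset (Fin n)) := by simp [hcd]
  have hcard_s : s.card = 4 := by
    rw [hs, Finset.card_insert_of_notMem hnas, Finset.card_insert_of_notMem hnbs,
      Finset.card_insert_of_notMem hncs, Finset.card_singleton]
  have hn : 4 ≤ n := by
    have h1 := Finset.card_le_univ s
    rw [hcard_s] at h1; simpa using h1
  set F : Finset (Fin n) := Finset.univ \ s with hF
  have hcardF : F.card = n - 4 := by
    rw [hF, Finset.card_sdiff_of_subset (Finset.subset_univ _), Finset.card_univ, Fintype.card_fin,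
      hcard_s]
  have hmemF : ∀ r ∈ F, r ≠ a ∧ r ≠ b ∧ r ≠ c ∧ r ≠ d := by
    intro r hr
    simp only [hF, hs, Finset.mem_sdiff, Finset.mem_univ, true_and, Finset.mem_insert,
      Finset.mem_singleton, not_or] at hr
    exact hr
  have hxF : ∀ r ∈ F, x r = 1 ∨ x r = -1 := by
    intro r hr
    rcases hx1 r with h | h | h
    · exact absurd ((ha r).mp h) (hmemF r hr).1
    · exact Or.inl h
    · exact Or.inr h
  have hyF : ∀ r ∈ F, y r = 1 ∨ y r = -1 := by
    intro r hr
    rcases hy1 r with h | h | h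
    · exact absurd ((hb r).mp h) (hmemF r hr).2.1
    · exact Or.inl h
    · exact Or.inr h
  have hzF : ∀ r ∈ F, z r = 1 ∨ z r = -1 := by
    intro r hr
    rcases hz1 r with h | h | h
    · exact absurd ((hc r).mp h) (hmemF r hr).2.2.1
    · exact Or.inl h
    · exact Or.inr h
  have hwF : ∀ r ∈ F, w r = 1 ∨ w r = -1 := by
    intro r hr
    rcases hw1 r with h | h | h
    · exact absurd ((hd r).mp h) (hmemF r hr).2.2.2
    · exact Or.inl h
    · exact Or.inr h
  -- zero values
  have hxa : x a = 0 := (ha a).mpr rfl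
  have hyb : y b = 0 := (hb b).mpr rfl
  have hzc : z c = 0 := (hc c).mpr rfl
  have hwd : w d = 0 := (hd d).mpr rfl
  -- ±1 values at excluded rows
  have pm : ∀ (f : Fin n → ℤ) (e : Fin n), (∀ r, f r = 0 ∨ f r = 1 ∨ f r = -1) →
      (∀ r, f r = 0 ↔ r = e) → ∀ r, r ≠ e → (f r = 1 ∨ f r = -1) := by
    intro f e h1 h0 r hre
    rcases h1 r with h | h | h
    · exact absurd ((h0 r).mp h) hre
    · exact Or.inl h
    · exact Or.inr h
  have pya := pm y b hy1 hb a hab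
  have pza := pm z c hz1 hc a hac
  have pwa := pm w d hw1 hd a had
  have pxb := pm x a hx1 ha b hab.symm
  have pzb := pm z c hz1 hc b hbc
  have pwb := pm w d hw1 hd b hbd
  have pxc := pm x a hx1 ha c hac.symm
  have pyc := pm y b hy1 hb c hbc.symm
  have pwc := pm w d hw1 hd c hcd
  have pxd := pm x a hx1 ha d had.symm
  have pyd := pm y b hy1 hb d hbd.symm
  have pzd := pm z c hz1 hc d hcd.symm
  -- splitting sums
  have hsplit : ∀ f : Fin n → ℤ,
      ∑ r, f r = ∑ r ∈ F, f r + (f a + (f b + (f c + f d))) := by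
    intro f
    rw [← Finset.sum_sdiff (Finset.subset_univ s), ← hF]
    congr 1
    rw [hs, Finset.sum_insert hnas, Finset.sum_insert hnbs, Finset.sum_insert hncs,
      Finset.sum_singleton]
  -- restricted pair sums
  have hFxy : ∑ r ∈ F, x r * y r = -(x c * y c + x d * y d) := by
    have h := hsplit fun r => x r * y r
    rw [oxy, hxa, hyb] at h; push_cast at h ⊢; linarith
  have hFxz : ∑ r ∈ F, x r * z r = -(x b * z b + x d * z d) := by
    have h := hsplit fun r => x r * z r
    rw [oxz, hxa, hzc] at h; push_cast at h ⊢; linarith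
  have hFxw : ∑ r ∈ F, x r * w r = -(x b * w b + x c * w c) := by
    have h := hsplit fun r => x r * w r
    rw [oxw, hxa, hwd] at h; push_cast at h ⊢; linarith
  have hFyz : ∑ r ∈ F, y r * z r = -(y a * z a + y d * z d) := by
    have h := hsplit fun r => y r * z r
    rw [oyz, hyb, hzc] at h; push_cast at h ⊢; linarith
  have hFyw : ∑ r ∈ F, y r * w r = -(y a * w a + y c * w c) := by
    have h := hsplit fun r => y r * w r
    rw [oyw, hyb, hwd] at h; push_cast at h ⊢; linarith
  have hFzw : ∑ r ∈ F, z r * w r = -(z a * w a + z b * w b) := by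
    have h := hsplit fun r => z r * w r
    rw [ozw, hzc, hwd] at h; push_cast at h ⊢; linarith
  -- quadruple sum restricted
  have hSq : ∑ r, x r * y r * z r * w r = ∑ r ∈ F, x r * y r * z r * w r := by
    have h := hsplit fun r => x r * y r * z r * w r
    rw [hxa, hyb, hzc, hwd] at h
    simp at h
    linarith
  set Sf : ℤ := ∑ r ∈ F, x r * y r * z r * w r with hSf
  clear_value Sf F s
  -- the three divisible sums
  have hA : (4 : ℤ) ∣ ∑ r ∈ F, (1 + x r * y r) * (1 + z r * w r) := by
    refine Finset.dvd_sum fun r hr => ?_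
    rcases pm_mul (hxF r hr) (hyF r hr) with h1 | h1 <;>
      rcases pm_mul (hzF r hr) (hwF r hr) with h2 | h2 <;> simp [h1, h2]
  have hB : (4 : ℤ) ∣ ∑ r ∈ F, (1 + x r * z r) * (1 + y r * w r) := by
    refine Finset.dvd_sum fun r hr => ?_
    rcases pm_mul (hxF r hr) (hzF r hr) with h1 | h1 <;>
      rcases pm_mul (hyF r hr) (hwF r hr) with h2 | h2 <;> simp [h1, h2]
  have hC : (4 : ℤ) ∣ ∑ r ∈ F, (1 + x r * w r) * (1 + y r * z r) := by
    refine Finset.dvd_sum fun r hr => ?_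
    rcases pm_mul (hxF r hr) (hwF r hr) with h1 | h1 <;>
      rcases pm_mul (hyF r hr) (hzF r hr) with h2 | h2 <;> simp [h1, h2]
  -- expansions
  have expandA : ∑ r ∈ F, (1 + x r * y r) * (1 + z r * w r)
      = (F.card : ℤ) + (∑ r ∈ F, x r * y r) + (∑ r ∈ F, z r * w r) + Sf := by
    rw [Finset.sum_congr rfl (fun r _ => show (1 + x r * y r) * (1 + z r * w r)
      = 1 + x r * y r + z r * w r + x r * y r * z r * w r by ring)]
    simp [Finset.sum_add_distrib]
    exact hSf.symm
  have expandB : ∑ r ∈ F, (1 + x r * z r) * (1 + y r * w r)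
      = (F.card : ℤ) + (∑ r ∈ F, x r * z r) + (∑ r ∈ F, y r * w r) + Sf := by
    rw [Finset.sum_congr rfl (fun r _ => show (1 + x r * z r) * (1 + y r * w r)
      = 1 + x r * z r + y r * w r + x r * y r * z r * w r by ring)]
    simp [Finset.sum_add_distrib]
    exact hSf.symm
  have expandC : ∑ r ∈ F, (1 + x r * w r) * (1 + y r * z r)
      = (F.card : ℤ) + (∑ r ∈ F, x r * w r) + (∑ r ∈ F, y r * z r) + Sf := by
    rw [Finset.sum_congr rfl (fun r _ => show (1 + x r * w r) * (1 + y r * z r)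
      = 1 + x r * w r + y r * z r + x r * y r * z r * w r by ring)]
    simp [Finset.sum_add_distrib]
    exact hSf.symm
  -- row triple sums
  have hRa := triple_dvd pya pza pwa
  have hRb := triple_dvd pxb pzb pwb
  have hRc := triple_dvd pxc pyc pwc
  have hRd := triple_dvd pxd pyd pzd
  have hNdvd : (4 : ℤ) ∣ (F.card : ℤ) := by
    rw [hcardF]
    have : 4 ∣ (n - 4) := by clear * - hn4; omega
    exact_mod_cast Int.natCast_dvd_natCast.mpr this
  -- combine
  obtain ⟨qA, hqA⟩ := hA
  obtain ⟨qB, hqB⟩ := hB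
  obtain ⟨qC, hqC⟩ := hC
  obtain ⟨ra, hra⟩ := hRa
  obtain ⟨rb, hrb⟩ := hRb
  obtain ⟨rc, hrc⟩ := hRc
  obtain ⟨rd, hrd⟩ := hRd
  obtain ⟨nq, hnq⟩ := hNdvd
  rw [expandA, hFxy, hFzw, hnq] at hqA
  rw [expandB, hFxz, hFyw, hnq] at hqB
  rw [expandC, hFxw, hFyz, hnq] at hqC
  have h3 : 3 * Sf = 4 * (qA + qB + qC - 3 * nq + ra + rb + rc + rd - 1) := by
    linear_combination hqA + hqB + hqC + hra + hrb + hrc + hrd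
  have hdvdS : 4 ∣ Sf := by omega
  -- the bound
  have hbound : |Sf| ≤ (F.card : ℤ) := by
    calc |Sf| = |∑ r ∈ F, x r * y r * z r * w r| := by rw [hSf]
    _ ≤ ∑ r ∈ F, |x r * y r * z r * w r| := Finset.abs_sum_le_sum_abs _ _
    _ = ∑ r ∈ F, 1 := by
        refine Finset.sum_congr rfl fun r hr => ?_
        rcases pm_mul (pm_mul (pm_mul (hxF r hr) (hyF r hr)) (hzF r hr)) (hwF r hr)
          with h | h <;> rw [h] <;> decide
    _ = (F.card : ℤ) := by simp
  rw [hSq]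
  refine ⟨hdvdS, ?_, hn⟩
  rw [Int.abs_eq_natAbs, hcardF] at hbound
  omega

lemma conf_quad {n m : ℕ} (C : Matrix (Fin n) (Fin m) ℝ) (hC : IsConferenceDesign C)
    (hn4 : n % 4 = 0) (i j k l : Fin m) (hij : i ≠ j) (hik : i ≠ k) (hil : i ≠ l)
    (hjk : j ≠ k) (hjl : j ≠ l) (hkl : k ≠ l) :
    ∃ s : ℤ, (∑ r, C r i * C r j * C r k * C r l) = (s : ℝ) ∧ 4 ∣ s ∧
      s.natAbs ≤ n - 4 ∧ 4 ≤ n := by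
  classical
  obtain ⟨horth, hzero, hrow, hval⟩ := hC
  set D : Fin n → Fin m → ℤ :=
    fun r c => if C r c = 0 then 0 else if C r c = 1 then 1 else -1 with hD
  have hcast : ∀ r c, ((D r c : ℤ) : ℝ) = C r c := by
    intro r c
    rcases hval r c with h | h | h <;> simp [hD, h] <;> norm_num
  have hDval : ∀ r c, D r c = 0 ∨ D r c = 1 ∨ D r c = -1 := by
    intro r c
    rw [hD]; dsimp only
    split_ifs <;> simp
  have hD0 : ∀ r c, D r c = 0 ↔ C r c = 0 := by
    intro r c
    constructor
    · intro h
      have := hcast r c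
      rw [h] at this
      simpa using this.symm
    · intro h; simp [hD, h]
  obtain ⟨a, haz, hau⟩ := hzero i
  obtain ⟨b, hbz, hbu⟩ := hzero j
  obtain ⟨c, hcz, hcu⟩ := hzero k
  obtain ⟨d, hdz, hdu⟩ := hzero l
  have ha : ∀ r, D r i = 0 ↔ r = a := fun r =>
    (hD0 r i).trans ⟨fun h => hau r h, fun h => h ▸ haz⟩
  have hb : ∀ r, D r j = 0 ↔ r = b := fun r =>
    (hD0 r j).trans ⟨fun h => hbu r h, fun h => h ▸ hbz⟩
  have hc : ∀ r, D r k = 0 ↔ r = c := fun r =>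
    (hD0 r k).trans ⟨fun h => hcu r h, fun h => h ▸ hcz⟩
  have hd : ∀ r, D r l = 0 ↔ r = d := fun r =>
    (hD0 r l).trans ⟨fun h => hdu r h, fun h => h ▸ hdz⟩
  have hab : a ≠ b := fun h => hij (hrow a i j haz (h ▸ hbz))
  have hac : a ≠ c := fun h => hik (hrow a i k haz (h ▸ hcz))
  have had : a ≠ d := fun h => hil (hrow a i l haz (h ▸ hdz))
  have hbc : b ≠ c := fun h => hjk (hrow b j k hbz (h ▸ hcz))
  have hbd : b ≠ d := fun h => hjl (hrow b j l hbz (h ▸ hdz))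
  have hcd : c ≠ d := fun h => hkl (hrow c k l hcz (h ▸ hdz))
  have horthD : ∀ p q : Fin m, p ≠ q → ∑ r, D r p * D r q = 0 := by
    intro p q hpq
    have h : ((∑ r, D r p * D r q : ℤ) : ℝ) = ∑ r, C r p * C r q := by
      push_cast
      exact Finset.sum_congr rfl fun r _ => by rw [hcast, hcast]
    rw [horth p q hpq] at h
    exact_mod_cast h
  obtain ⟨h4, hle, hn⟩ := key (fun r => D r i) (fun r => D r j) (fun r => D r k)
    (fun r => D r l) (fun r => hDval r i) (fun r => hDval r j) (fun r => hDval r k)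
    (fun r => hDval r l) a b c d ha hb hc hd hab hac had hbc hbd hcd
    (horthD i j hij) (horthD i k hik) (horthD i l hil)
    (horthD j k hjk) (horthD j l hjl) (horthD k l hkl) hn4
  refine ⟨∑ r, D r i * D r j * D r k * D r l, ?_, h4, hle, hn⟩
  push_cast
  exact Finset.sum_congr rfl fun r _ => by rw [hcast, hcast, hcast, hcast]

lemma conf_sq_s14 {n m : ℕ} (C : Matrix (Fin n) (Fin m) ℝ) (hC : IsConferenceDesign C)
    (i j : Fin m) (hij : i ≠ j) :
    ∑ r, (C r i * C r j) ^ 2 = (n : ℝ) - 2 := by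
  classical
  obtain ⟨horth, hzero, hrow, hval⟩ := hC
  obtain ⟨a, haz, hau⟩ := hzero i
  obtain ⟨b, hbz, hbu⟩ := hzero j
  have hab : a ≠ b := fun h => hij (hrow a i j haz (h ▸ hbz))
  set s : Finset (Fin n) := insert a {b} with hs
  have hnas : a ∉ ({b} : Finset (Fin n)) := by simp [hab]
  have hcard_s : s.card = 2 := by
    rw [hs, Finset.card_insert_of_notMem hnas, Finset.card_singleton]
  have hn : 2 ≤ n := by
    have h1 := Finset.card_le_univ s
    rw [hcard_s] at h1; simpa using h1
  have hsplit : ∑ r, (C r i * C r j) ^ 2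
      = ∑ r ∈ Finset.univ \ s, (C r i * C r j) ^ 2
        + ((C a i * C a j) ^ 2 + (C b i * C b j) ^ 2) := by
    rw [← Finset.sum_sdiff (Finset.subset_univ s)]
    congr 1
    rw [hs, Finset.sum_insert hnas, Finset.sum_singleton]
  have hones : ∀ r ∈ Finset.univ \ s, (C r i * C r j) ^ 2 = 1 := by
    intro r hr
    simp only [hs, Finset.mem_sdiff, Finset.mem_univ, true_and, Finset.mem_insert,
      Finset.mem_singleton, not_or] at hr
    have h1 : C r i = 1 ∨ C r i = -1 := by
      rcases hval r i with h | h | h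
      · exact absurd (hau r h) hr.1
      · exact Or.inl h
      · exact Or.inr h
    have h2 : C r j = 1 ∨ C r j = -1 := by
      rcases hval r j with h | h | h
      · exact absurd (hbu r h) hr.2
      · exact Or.inl h
      · exact Or.inr h
    rcases h1 with h | h <;> rcases h2 with h' | h' <;> rw [h, h'] <;> norm_num
  rw [hsplit, haz, hbz, Finset.sum_congr rfl hones]
  have hcardF : (Finset.univ \ s).card = n - 2 := by
    rw [Finset.card_sdiff_of_subset (Finset.subset_univ _), Finset.card_univ, Fintype.card_fin, hcard_s]
  rw [Finset.sum_const, hcardF, nsmul_eq_mul, mul_one]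
  have : ((n - 2 : ℕ) : ℝ) = (n : ℝ) - 2 := by
    push_cast [Nat.cast_sub hn]
    ring
  rw [this]; ring

lemma sum_cOMARS {n m n₀ : ℕ} (C₁ C₂ : Matrix (Fin n) (Fin m) ℝ)
    (f : (Fin m → ℝ) → ℝ) (hf0 : f (fun _ => 0) = 0)
    (hfneg : ∀ v : Fin m → ℝ, f (fun c => -(v c)) = f v) :
    ∑ r, f (cOMARS C₁ C₂ n₀ r) = 2 * (∑ a, f (C₁ a)) + 2 * (∑ a, f (C₂ a)) := by
  rw [Fintype.sum_sum_type, Fintype.sum_sum_type, Fintype.sum_sum_type,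
    Fintype.sum_sum_type]
  show ((∑ a : Fin n, f (fun c => C₁ a c) + ∑ a : Fin n, f (fun c => -C₁ a c))
      + (∑ a : Fin n, f (fun c => C₂ a c) + ∑ a : Fin n, f (fun c => -C₂ a c)))
      + ∑ _a : Fin n₀, f (fun _ => 0) = _
  simp only [hfneg, hf0, Finset.sum_const_zero, add_zero]
  ring


lemma pearson_eq {ι : Type*} [Fintype ι] (u v : ι → ℝ) (hu : ∑ r, u r = 0)
    (hv : ∑ r, v r = 0) (A S : ℝ) (hA : 0 ≤ A)
    (hu2 : ∑ r, u r ^ 2 = A) (hv2 : ∑ r, v r ^ 2 = A) (hS : ∑ r, u r * v r = S) :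
    pearson u v = S / A := by
  rw [pearson, hu, hv, hu2, hv2, hS]
  simp [Real.mul_self_sqrt hA]

theorem stmt_14 {n m n₀ : ℕ} (C₁ C₂ : Matrix (Fin n) (Fin m) ℝ)
    (h₁ : IsConferenceDesign C₁) (h₂ : IsConferenceDesign C₂)
    (hn4 : n % 4 = 0)
    (i j k l : Fin m) (hij : i ≠ j) (hik : i ≠ k) (hil : i ≠ l)
    (hjk : j ≠ k) (hjl : j ≠ l) (hkl : k ≠ l) :
    ∃ lam : ℕ, 2 ≤ lam ∧ lam ≤ n / 2 ∧
      |pearson (fun r => cOMARS C₁ C₂ n₀ r i * cOMARS C₁ C₂ n₀ r j)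
          (fun r => cOMARS C₁ C₂ n₀ r k * cOMARS C₁ C₂ n₀ r l)|
        = ((n : ℝ) - 2 * (lam : ℝ)) / ((n : ℝ) - 2) ∧
      |pearson (fun r => cOMARS C₁ C₂ n₀ r i * cOMARS C₁ C₂ n₀ r j)
          (fun r => cOMARS C₁ C₂ n₀ r k * cOMARS C₁ C₂ n₀ r l)|
        = |∑ r, cOMARS C₁ C₂ n₀ r i * cOMARS C₁ C₂ n₀ r j *
            cOMARS C₁ C₂ n₀ r k * cOMARS C₁ C₂ n₀ r l| / (4 * ((n : ℝ) - 2)) := by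
  obtain ⟨s₁, hs₁, h4s₁, hb₁, hn⟩ := conf_quad C₁ h₁ hn4 i j k l hij hik hil hjk hjl hkl
  obtain ⟨s₂, hs₂, h4s₂, hb₂, -⟩ := conf_quad C₂ h₂ hn4 i j k l hij hik hil hjk hjl hkl
  have Su : (∑ r, cOMARS C₁ C₂ n₀ r i * cOMARS C₁ C₂ n₀ r j) = 0 := by
    have h := sum_cOMARS (n₀ := n₀) C₁ C₂ (fun v => v i * v j) (by norm_num)
      (fun v => by ring)
    rw [h₁.1 i j hij, h₂.1 i j hij] at h
    exact h.trans (by ring)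
  have Sv : (∑ r, cOMARS C₁ C₂ n₀ r k * cOMARS C₁ C₂ n₀ r l) = 0 := by
    have h := sum_cOMARS (n₀ := n₀) C₁ C₂ (fun v => v k * v l) (by norm_num)
      (fun v => by ring)
    rw [h₁.1 k l hkl, h₂.1 k l hkl] at h
    exact h.trans (by ring)
  have Su2 : (∑ r, (cOMARS C₁ C₂ n₀ r i * cOMARS C₁ C₂ n₀ r j) ^ 2)
      = 4 * ((n : ℝ) - 2) := by
    have h := sum_cOMARS (n₀ := n₀) C₁ C₂ (fun v => (v i * v j) ^ 2) (by norm_num)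
      (fun v => by ring)
    rw [conf_sq_s14 C₁ h₁ i j hij, conf_sq_s14 C₂ h₂ i j hij] at h
    exact h.trans (by ring)
  have Sv2 : (∑ r, (cOMARS C₁ C₂ n₀ r k * cOMARS C₁ C₂ n₀ r l) ^ 2)
      = 4 * ((n : ℝ) - 2) := by
    have h := sum_cOMARS (n₀ := n₀) C₁ C₂ (fun v => (v k * v l) ^ 2) (by norm_num)
      (fun v => by ring)
    rw [conf_sq_s14 C₁ h₁ k l hkl, conf_sq_s14 C₂ h₂ k l hkl] at h
    exact h.trans (by ring)
  have Sq : (∑ r, cOMARS C₁ C₂ n₀ r i * cOMARS C₁ C₂ n₀ r j *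
      cOMARS C₁ C₂ n₀ r k * cOMARS C₁ C₂ n₀ r l) = 2 * ((s₁ : ℝ) + s₂) := by
    have h := sum_cOMARS (n₀ := n₀) C₁ C₂ (fun v => v i * v j * v k * v l)
      (by norm_num) (fun v => by ring)
    rw [hs₁, hs₂] at h
    exact h.trans (by ring)
  have Suv : (∑ r, (cOMARS C₁ C₂ n₀ r i * cOMARS C₁ C₂ n₀ r j) *
      (cOMARS C₁ C₂ n₀ r k * cOMARS C₁ C₂ n₀ r l)) = 2 * ((s₁ : ℝ) + s₂) := by
    rw [← Sq]
    exact Finset.sum_congr rfl fun r _ => by ring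
  have hn2 : (0 : ℝ) < (n : ℝ) - 2 := by
    have h4 : (4 : ℝ) ≤ (n : ℝ) := by exact_mod_cast hn
    linarith
  have hpear : pearson (fun r => cOMARS C₁ C₂ n₀ r i * cOMARS C₁ C₂ n₀ r j)
      (fun r => cOMARS C₁ C₂ n₀ r k * cOMARS C₁ C₂ n₀ r l)
      = 2 * ((s₁ : ℝ) + s₂) / (4 * ((n : ℝ) - 2)) :=
    pearson_eq _ _ Su Sv (4 * ((n : ℝ) - 2)) (2 * ((s₁ : ℝ) + s₂))
      (by linarith) Su2 Sv2 Suv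
  set q : ℕ := (s₁ + s₂).natAbs with hq
  have habsT : |(s₁ : ℝ) + s₂| = (q : ℝ) := by
    rw [hq, Nat.cast_natAbs]
    push_cast
    ring
  have h4q : (4 : ℕ) ∣ q := by
    have := Int.natAbs_dvd_natAbs.mpr (dvd_add h4s₁ h4s₂)
    simpa [hq] using this
  have hqle : q ≤ 2 * n - 8 := by
    have h1 := Int.natAbs_add_le s₁ s₂
    omega
  refine ⟨n / 2 - q / 4, by omega, by omega, ?_, ?_⟩
  · have hlam4 : 4 * (n / 2 - q / 4) + q = 2 * n := by omega
    have hlamR : 4 * ((n / 2 - q / 4 : ℕ) : ℝ) + (q : ℝ) = 2 * (n : ℝ) := by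
      exact_mod_cast hlam4
    rw [hpear, abs_div, abs_of_pos (by linarith : (0 : ℝ) < 4 * ((n : ℝ) - 2)),
      abs_mul, habsT]
    have h2 : (n : ℝ) - 2 * ((n / 2 - q / 4 : ℕ) : ℝ) = (q : ℝ) / 2 := by linarith
    rw [h2]
    rw [show |(2 : ℝ)| = 2 by norm_num]
    field_simp
    ring
  · rw [hpear, Sq, abs_div, abs_of_pos (by linarith : (0 : ℝ) < 4 * ((n : ℝ) - 2))]
end

section
/- In a cOMARS design built from two parent DSDs (foldovers of n×m conference designs, m > 4) with n₀ center runs, the absolute correlation r_{ii,jk} between a quadratic-effect column and a two-factor interaction column not sharing a factor is proportional to the absolute correlation r_{ij,ik} between two interaction columns sharing a factor: r_{ii,jk} is nonzero if and only if r_{ij,ik} is nonzero, and in the nonzero case r_{ii,jk}/r_{ij,ik} = (n−2)·sqrt((4n+n₀)/((n₀+4)(n−1)(n−2))). -/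
open Finset Filter

section aux
variable {n m : ℕ} {C : Matrix (Fin n) (Fin m) ℝ}

lemma cd_sum_sq (hC : IsConferenceDesign C) (j : Fin m) :
    ∑ a, C a j ^ 2 = (n : ℝ) - 1 := by
  obtain ⟨z, hz, hzu⟩ := hC.2.1 j
  have key : ∀ a : Fin n, C a j ^ 2 = 1 - (if a = z then (1:ℝ) else 0) := by
    intro a
    by_cases h : a = z
    · simp [h, hz]
    · have h0 : C a j ≠ 0 := fun h0 => h (hzu a h0)
      rcases hC.2.2.2 a j with h' | h' | h' <;> simp [h, h'] at * <;> norm_num [h']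
  rw [Finset.sum_congr rfl fun a _ => key a]
  simp [Finset.sum_sub_distrib]

lemma cd_sum_sq_mul (hC : IsConferenceDesign C) {i j k : Fin m} (hjk : j ≠ k)
    {z : Fin n} (hz : C z i = 0) :
    ∑ a, C a i ^ 2 * (C a j * C a k) = -(C z j * C z k) := by
  obtain ⟨r₀, hr₀, hu⟩ := hC.2.1 i
  have key : ∀ a : Fin n, C a i ^ 2 * (C a j * C a k)
      = C a j * C a k - (if a = z then C z j * C z k else 0) := by
    intro a
    by_cases h : a = z
    · subst h; simp [hz]
    · have h0 : C a i ≠ 0 := by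
        intro h0
        exact h ((hu a h0).trans (hu z hz).symm)
      rcases hC.2.2.2 a i with h' | h' | h' <;>
        first | exact absurd h' h0 | (simp [h, h']; try ring)
  rw [Finset.sum_congr rfl fun a _ => key a]
  rw [Finset.sum_sub_distrib, hC.1 j k hjk]
  simp

lemma cd_sum_sq_sq (hC : IsConferenceDesign C) {i j : Fin m} (hij : i ≠ j)
    {z : Fin n} (hz : C z i = 0) :
    ∑ a, C a i ^ 2 * C a j ^ 2 = (n : ℝ) - 2 := by
  obtain ⟨r₀, hr₀, hu⟩ := hC.2.1 i
  have hzj : C z j ^ 2 = 1 := by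
    have h0 : C z j ≠ 0 := fun h0 => hij (hC.2.2.1 z i j hz h0)
    rcases hC.2.2.2 z j with h' | h' | h' <;> simp [h'] at * <;> norm_num [h']
  have key : ∀ a : Fin n, C a i ^ 2 * C a j ^ 2
      = C a j ^ 2 - (if a = z then (1:ℝ) else 0) := by
    intro a
    by_cases h : a = z
    · subst h; simp [hz, hzj]
    · have h0 : C a i ≠ 0 := by
        intro h0
        exact h ((hu a h0).trans (hu z hz).symm)
      rcases hC.2.2.2 a i with h' | h' | h' <;>
        first | exact absurd h' h0 | simp [h, h']
  rw [Finset.sum_congr rfl fun a _ => key a]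
  rw [Finset.sum_sub_distrib, cd_sum_sq hC j]
  simp; ring

lemma cd_le (hC : IsConferenceDesign C) : m ≤ n := by
  have hinj : Function.Injective (fun j : Fin m => (hC.2.1 j).choose) := by
    intro a b hab
    have hab' : (hC.2.1 a).choose = (hC.2.1 b).choose := hab
    exact hC.2.2.1 _ a b (hC.2.1 a).choose_spec.1
      (hab' ▸ (hC.2.1 b).choose_spec.1)
  simpa using Fintype.card_le_of_injective _ hinj

end aux

lemma cd_sum_sq_sq' {n m : ℕ} {C : Matrix (Fin n) (Fin m) ℝ}
    (hC : IsConferenceDesign C) {i j : Fin m} (hij : i ≠ j) :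
    ∑ a, C a i ^ 2 * C a j ^ 2 = (n : ℝ) - 2 := by
  obtain ⟨z, hz, -⟩ := hC.2.1 i
  exact cd_sum_sq_sq hC hij hz


theorem stmt_16 {n m n₀ : ℕ} (C₁ C₂ : Matrix (Fin n) (Fin m) ℝ)
    (h₁ : IsConferenceDesign C₁) (h₂ : IsConferenceDesign C₂) (hm : 4 < m)
    (i j k : Fin m) (hij : i ≠ j) (hik : i ≠ k) (hjk : j ≠ k) :
    (|pearson (fun r => (cOMARS C₁ C₂ n₀ r i) ^ 2)
        (fun r => cOMARS C₁ C₂ n₀ r j * cOMARS C₁ C₂ n₀ r k)| ≠ 0 ↔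
     |pearson (fun r => cOMARS C₁ C₂ n₀ r i * cOMARS C₁ C₂ n₀ r j)
        (fun r => cOMARS C₁ C₂ n₀ r i * cOMARS C₁ C₂ n₀ r k)| ≠ 0) ∧
    (|pearson (fun r => (cOMARS C₁ C₂ n₀ r i) ^ 2)
        (fun r => cOMARS C₁ C₂ n₀ r j * cOMARS C₁ C₂ n₀ r k)| ≠ 0 →
      |pearson (fun r => (cOMARS C₁ C₂ n₀ r i) ^ 2)
          (fun r => cOMARS C₁ C₂ n₀ r j * cOMARS C₁ C₂ n₀ r k)| /
        |pearson (fun r => cOMARS C₁ C₂ n₀ r i * cOMARS C₁ C₂ n₀ r j)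
          (fun r => cOMARS C₁ C₂ n₀ r i * cOMARS C₁ C₂ n₀ r k)|
        = ((n : ℝ) - 2) * Real.sqrt ((4 * (n : ℝ) + (n₀ : ℝ)) /
            (((n₀ : ℝ) + 4) * ((n : ℝ) - 1) * ((n : ℝ) - 2)))) := by
  classical
  obtain ⟨z₁, hz₁, -⟩ := h₁.2.1 i
  obtain ⟨z₂, hz₂, -⟩ := h₂.2.1 i
  -- decomposition of sums over the run index
  have hsum : ∀ f : (((Fin n ⊕ Fin n) ⊕ (Fin n ⊕ Fin n)) ⊕ Fin n₀) → ℝ,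
      ∑ r, f r = (∑ a, f (.inl (.inl (.inl a))) + ∑ a, f (.inl (.inl (.inr a)))
        + ∑ a, f (.inl (.inr (.inl a))) + ∑ a, f (.inl (.inr (.inr a)))) + ∑ a, f (.inr a) := by
    intro f
    simp only [Fintype.sum_sum_type]
    ring
  have hcard : ((Fintype.card ((((Fin n ⊕ Fin n) ⊕ (Fin n ⊕ Fin n)) ⊕ Fin n₀))) : ℝ)
      = 4 * (n : ℝ) + (n₀ : ℝ) := by
    simp [Fintype.card_sum]
    push_cast
    ring
  -- entries are in {0, ±1}
  have hent : ∀ r l, cOMARS C₁ C₂ n₀ r l = 0 ∨ cOMARS C₁ C₂ n₀ r l = 1 ∨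
      cOMARS C₁ C₂ n₀ r l = -1 := by
    rintro (((a|a)|(a|a))|a) l
    · exact h₁.2.2.2 a l
    · rcases h₁.2.2.2 a l with h|h|h <;> simp [cOMARS, foldover, h]
    · exact h₂.2.2.2 a l
    · rcases h₂.2.2.2 a l with h|h|h <;> simp [cOMARS, foldover, h]
    · left; rfl
  -- the individual sums
  have hSu : ∑ r, cOMARS C₁ C₂ n₀ r i ^ 2 = 4*((n:ℝ)-1) := by
    rw [hsum]
    simp [cOMARS, foldover, cd_sum_sq h₁ i, cd_sum_sq h₂ i]
    ring
  have hSuu : ∑ r, (cOMARS C₁ C₂ n₀ r i ^ 2) ^ 2 = 4*((n:ℝ)-1) := by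
    rw [Finset.sum_congr rfl fun r _ => show (cOMARS C₁ C₂ n₀ r i ^ 2) ^ 2
        = cOMARS C₁ C₂ n₀ r i ^ 2 by rcases hent r i with h|h|h <;> rw [h] <;> norm_num]
    exact hSu
  have hSjk : ∑ r, cOMARS C₁ C₂ n₀ r j * cOMARS C₁ C₂ n₀ r k = 0 := by
    rw [hsum]
    simp [cOMARS, foldover, h₁.1 j k hjk, h₂.1 j k hjk]
  have hSjk2 : ∑ r, (cOMARS C₁ C₂ n₀ r j * cOMARS C₁ C₂ n₀ r k) ^ 2 = 4*((n:ℝ)-2) := by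
    rw [hsum]
    simp [cOMARS, foldover, mul_pow, cd_sum_sq_sq' h₁ hjk, cd_sum_sq_sq' h₂ hjk]
    ring
  have hSij : ∑ r, cOMARS C₁ C₂ n₀ r i * cOMARS C₁ C₂ n₀ r j = 0 := by
    rw [hsum]
    simp [cOMARS, foldover, h₁.1 i j hij, h₂.1 i j hij]
  have hSik : ∑ r, cOMARS C₁ C₂ n₀ r i * cOMARS C₁ C₂ n₀ r k = 0 := by
    rw [hsum]
    simp [cOMARS, foldover, h₁.1 i k hik, h₂.1 i k hik]
  have hSij2 : ∑ r, (cOMARS C₁ C₂ n₀ r i * cOMARS C₁ C₂ n₀ r j) ^ 2 = 4*((n:ℝ)-2) := by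
    rw [hsum]
    simp [cOMARS, foldover, mul_pow, cd_sum_sq_sq' h₁ hij, cd_sum_sq_sq' h₂ hij]
    ring
  have hSik2 : ∑ r, (cOMARS C₁ C₂ n₀ r i * cOMARS C₁ C₂ n₀ r k) ^ 2 = 4*((n:ℝ)-2) := by
    rw [hsum]
    simp [cOMARS, foldover, mul_pow, cd_sum_sq_sq' h₁ hik, cd_sum_sq_sq' h₂ hik]
    ring
  have hSuv : ∑ r, cOMARS C₁ C₂ n₀ r i ^ 2 * (cOMARS C₁ C₂ n₀ r j * cOMARS C₁ C₂ n₀ r k)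
      = -2 * (C₁ z₁ j * C₁ z₁ k + C₂ z₂ j * C₂ z₂ k) := by
    rw [hsum]
    simp only [cOMARS, foldover, neg_sq, neg_mul_neg, mul_zero, zero_mul,
      Finset.sum_const_zero]
    rw [cd_sum_sq_mul h₁ hjk hz₁, cd_sum_sq_mul h₂ hjk hz₂]
    ring
  have hSww : ∑ r, (cOMARS C₁ C₂ n₀ r i * cOMARS C₁ C₂ n₀ r j) *
        (cOMARS C₁ C₂ n₀ r i * cOMARS C₁ C₂ n₀ r k)
      = -2 * (C₁ z₁ j * C₁ z₁ k + C₂ z₂ j * C₂ z₂ k) := by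
    rw [Finset.sum_congr rfl fun r _ => show
      (cOMARS C₁ C₂ n₀ r i * cOMARS C₁ C₂ n₀ r j) * (cOMARS C₁ C₂ n₀ r i * cOMARS C₁ C₂ n₀ r k)
      = cOMARS C₁ C₂ n₀ r i ^ 2 * (cOMARS C₁ C₂ n₀ r j * cOMARS C₁ C₂ n₀ r k) by ring]
    exact hSuv
  -- basic positivity facts
  have hn5 : (5:ℝ) ≤ (n:ℝ) := by
    have h1 : m ≤ n := cd_le h₁
    have : 5 ≤ n := le_trans hm h1
    exact_mod_cast this
  have hn0 : (0:ℝ) ≤ (n₀:ℝ) := Nat.cast_nonneg n₀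
  have hN : (0:ℝ) < 4 * (n:ℝ) + (n₀:ℝ) := by linarith
  have hBpos : (0:ℝ) < 4*((n:ℝ)-2) := by linarith
  have hAeq : 4*((n:ℝ)-1) - (4*((n:ℝ)-1))^2 / (4 * (n:ℝ) + (n₀:ℝ))
      = 4*((n:ℝ)-1)*((n₀:ℝ)+4) / (4 * (n:ℝ) + (n₀:ℝ)) := by
    field_simp
    ring
  have hApos : (0:ℝ) < 4*((n:ℝ)-1) - (4*((n:ℝ)-1))^2 / (4 * (n:ℝ) + (n₀:ℝ)) := by
    rw [hAeq]
    apply div_pos _ hN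
    nlinarith
  -- unfold pearson and rewrite all sums
  simp only [pearson]
  rw [hSuv, hSu, hSuu, hSjk, hSjk2, hSww, hSij, hSik, hSij2, hSik2, hcard]
  simp only [mul_zero, zero_mul, zero_div, sub_zero, ne_eq, zero_pow,
    OfNat.ofNat_ne_zero, not_false_eq_true]
  set S : ℝ := -2 * (C₁ z₁ j * C₁ z₁ k + C₂ z₂ j * C₂ z₂ k) with hSdef
  set A : ℝ := 4*((n:ℝ)-1) - (4*((n:ℝ)-1))^2 / (4 * (n:ℝ) + (n₀:ℝ)) with hAdef
  set B : ℝ := 4*((n:ℝ)-2) with hBdef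
  have hsA : (0:ℝ) < Real.sqrt A := Real.sqrt_pos.mpr hApos
  have hsB : (0:ℝ) < Real.sqrt B := Real.sqrt_pos.mpr hBpos
  have hBB : Real.sqrt B * Real.sqrt B = B := Real.mul_self_sqrt hBpos.le
  have e1 : |S / (Real.sqrt A * Real.sqrt B)| ≠ 0 ↔ S ≠ 0 := by
    rw [abs_ne_zero, div_ne_zero_iff]
    simp [ne_of_gt (mul_pos hsA hsB)]
  have e2 : |S / (Real.sqrt B * Real.sqrt B)| ≠ 0 ↔ S ≠ 0 := by
    rw [abs_ne_zero, div_ne_zero_iff]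
    simp [ne_of_gt (mul_pos hsB hsB)]
  refine ⟨e1.trans e2.symm, ?_⟩
  intro hne
  have hS0 : S ≠ 0 := e1.mp hne
  have hSabs : |S| ≠ 0 := abs_ne_zero.mpr hS0
  rw [abs_div, abs_div, abs_of_pos (mul_pos hsA hsB), hBB, abs_of_pos hBpos]
  have hstep : |S| / (Real.sqrt A * Real.sqrt B) / (|S| / B)
      = B / (Real.sqrt A * Real.sqrt B) := by
    rw [div_div_div_comm, div_self hSabs]
    field_simp
  rw [hstep]
  -- final square-root computation
  have hprod : (0:ℝ) < ((n₀:ℝ)+4) * ((n:ℝ)-1) * ((n:ℝ)-2) :=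
    mul_pos (mul_pos (by linarith) (by linarith)) (by linarith)
  have hX : (0:ℝ) ≤ (4 * (n:ℝ) + (n₀:ℝ)) / (((n₀:ℝ)+4) * ((n:ℝ)-1) * ((n:ℝ)-2)) :=
    div_nonneg hN.le hprod.le
  have hL : (0:ℝ) ≤ B / (Real.sqrt A * Real.sqrt B) :=
    div_nonneg hBpos.le (mul_nonneg hsA.le hsB.le)
  have hR : (0:ℝ) ≤ ((n:ℝ)-2) * Real.sqrt ((4 * (n:ℝ) + (n₀:ℝ)) /
      (((n₀:ℝ)+4) * ((n:ℝ)-1) * ((n:ℝ)-2))) :=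
    mul_nonneg (by linarith) (Real.sqrt_nonneg _)
  have hsq : (B / (Real.sqrt A * Real.sqrt B))^2
      = (((n:ℝ)-2) * Real.sqrt ((4 * (n:ℝ) + (n₀:ℝ)) /
        (((n₀:ℝ)+4) * ((n:ℝ)-1) * ((n:ℝ)-2))))^2 := by
    have e3 : (Real.sqrt A * Real.sqrt B)^2 = A * B := by
      rw [mul_pow, Real.sq_sqrt hApos.le, Real.sq_sqrt hBpos.le]
    have e4 : (((n:ℝ)-2) * Real.sqrt ((4 * (n:ℝ) + (n₀:ℝ)) /
        (((n₀:ℝ)+4) * ((n:ℝ)-1) * ((n:ℝ)-2))))^2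
        = ((n:ℝ)-2)^2 * ((4 * (n:ℝ) + (n₀:ℝ)) / (((n₀:ℝ)+4) * ((n:ℝ)-1) * ((n:ℝ)-2))) := by
      rw [mul_pow, Real.sq_sqrt hX]
    rw [div_pow, e3, e4, hAeq, hBdef]
    have h1 : (4 * (n:ℝ) + (n₀:ℝ)) ≠ 0 := ne_of_gt hN
    have h2 : ((n₀:ℝ)+4) ≠ 0 := by linarith
    have h3 : ((n:ℝ)-1) ≠ 0 := by linarith
    have h4 : ((n:ℝ)-2) ≠ 0 := by linarith
    field_simp
  calc B / (Real.sqrt A * Real.sqrt B)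
      = Real.sqrt ((B / (Real.sqrt A * Real.sqrt B))^2) := (Real.sqrt_sq hL).symm
    _ = Real.sqrt ((((n:ℝ)-2) * Real.sqrt ((4 * (n:ℝ) + (n₀:ℝ)) /
        (((n₀:ℝ)+4) * ((n:ℝ)-1) * ((n:ℝ)-2))))^2) := by rw [hsq]
    _ = _ := Real.sqrt_sq hR
end
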